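/- arXiv:2011.05524 — 9 statements merged into one kernel-verified Lean document; each statement's English description precedes it below -/
import Mathlib

section
/- Let n, m ≥ 1. Let ẋ, a, F_lo, F_hi ∈ ℝⁿ, u ∈ ℝᵐ, and B, G_lo, G_hi ∈ ℝ^{n×m}. Assume ẋ = a + B·u, that F_lo ≤ a ≤ F_hi componentwise, and G_lo ≤ B ≤ G_hi entrywise. Then for every k ∈ {1,…,n}: max(F_lo_k, ẋ_k − Σ_{l=1}^m max((G_lo)_{k,l}·u_l, (G_hi)_{k,l}·u_l)) ≤ a_k ≤ min(F_hi_k, ẋ_k − Σ_{l=1}^m min((G_lo)_{k,l}·u_l, (G_hi)_{k,l}·u_l)). -/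
open Finset

theorem contraction_sound (n m : ℕ) (hn : 1 ≤ n) (hm : 1 ≤ m)
    (xdot a Flo Fhi : Fin n → ℝ) (u : Fin m → ℝ)
    (B Glo Ghi : Fin n → Fin m → ℝ)
    (heq : ∀ k, xdot k = a k + ∑ l, B k l * u l)
    (hF : ∀ k, Flo k ≤ a k ∧ a k ≤ Fhi k)
    (hG : ∀ k l, Glo k l ≤ B k l ∧ B k l ≤ Ghi k l) :
    ∀ k, max (Flo k) (xdot k - ∑ l, max (Glo k l * u l) (Ghi k l * u l)) ≤ a k ∧
      a k ≤ min (Fhi k) (xdot k - ∑ l, min (Glo k l * u l) (Ghi k l * u l)) := by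
  intro k
  have hterm : ∀ l, min (Glo k l * u l) (Ghi k l * u l) ≤ B k l * u l ∧
      B k l * u l ≤ max (Glo k l * u l) (Ghi k l * u l) := by
    intro l
    obtain ⟨h1, h2⟩ := hG k l
    rcases le_total 0 (u l) with hu | hu
    · constructor
      · exact le_trans (min_le_left _ _) (mul_le_mul_of_nonneg_right h1 hu)
      · exact le_trans (mul_le_mul_of_nonneg_right h2 hu) (le_max_right _ _)
    · constructor
      · exact le_trans (min_le_right _ _) (mul_le_mul_of_nonpos_right h2 hu)
      · exact le_trans (mul_le_mul_of_nonpos_right h1 hu) (le_max_left _ _)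
  have hlo : ∑ l, min (Glo k l * u l) (Ghi k l * u l) ≤ ∑ l, B k l * u l :=
    Finset.sum_le_sum fun l _ => (hterm l).1
  have hhi : ∑ l, B k l * u l ≤ ∑ l, max (Glo k l * u l) (Ghi k l * u l) :=
    Finset.sum_le_sum fun l _ => (hterm l).2
  have he := heq k
  obtain ⟨hf1, hf2⟩ := hF k
  constructor
  · exact max_le hf1 (by linarith)
  · exact le_min hf2 (by linarith)
end

section
/- Let n, m ≥ 1, ẋ ∈ ℝⁿ, u ∈ ℝᵐ, F_lo ≤ F_hi in ℝⁿ, and G_lo ≤ G_hi in ℝ^{n×m} (entrywise). For each k define m⁻_k = Σ_{l=1}^m min((G_lo)_{k,l}·u_l, (G_hi)_{k,l}·u_l), m⁺_k = Σ_{l=1}^m max((G_lo)_{k,l}·u_l, (G_hi)_{k,l}·u_l), L_k = max(F_lo_k, ẋ_k − m⁺_k) and U_k = min(F_hi_k, ẋ_k − m⁻_k). Assume L_j ≤ U_j for every j ∈ {1,…,n}. Then for every k, the set { a_k : a ∈ ℝⁿ, B ∈ ℝ^{n×m}, F_lo ≤ a ≤ F_hi, G_lo ≤ B ≤ G_hi,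 ẋ = a + B·u } is exactly the closed interval [L_k, U_k]. -/
open Finset

lemma mul_bounds (g1 g2 b u : ℝ) (h1 : g1 ≤ b) (h2 : b ≤ g2) :
    min (g1*u) (g2*u) ≤ b*u ∧ b*u ≤ max (g1*u) (g2*u) := by
  rcases le_total 0 u with hu | hu
  · exact ⟨le_trans (min_le_left _ _) (mul_le_mul_of_nonneg_right h1 hu),
      le_trans (mul_le_mul_of_nonneg_right h2 hu) (le_max_right _ _)⟩
  · exact ⟨le_trans (min_le_right _ _) (mul_le_mul_of_nonpos_right h2 hu),
      le_trans (mul_le_mul_of_nonpos_right h1 hu) (le_max_left _ _)⟩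

theorem contraction_optimal (n m : ℕ) (hn : 1 ≤ n) (hm : 1 ≤ m)
    (xdot Flo Fhi : Fin n → ℝ) (u : Fin m → ℝ)
    (Glo Ghi : Fin n → Fin m → ℝ)
    (hF : ∀ k, Flo k ≤ Fhi k) (hG : ∀ k l, Glo k l ≤ Ghi k l)
    (L U : Fin n → ℝ)
    (hL : ∀ k, L k = max (Flo k) (xdot k - ∑ l, max (Glo k l * u l) (Ghi k l * u l)))
    (hU : ∀ k, U k = min (Fhi k) (xdot k - ∑ l, min (Glo k l * u l) (Ghi k l * u l)))
    (hLU : ∀ j, L j ≤ U j) :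
    ∀ k, {v : ℝ | ∃ (a : Fin n → ℝ) (B : Fin n → Fin m → ℝ),
        (∀ j, Flo j ≤ a j ∧ a j ≤ Fhi j) ∧
        (∀ j l, Glo j l ≤ B j l ∧ B j l ≤ Ghi j l) ∧
        (∀ j, xdot j = a j + ∑ l, B j l * u l) ∧ v = a k} = Set.Icc (L k) (U k) := by
  intro k
  set mlo : Fin n → ℝ := fun j => ∑ l, min (Glo j l * u l) (Ghi j l * u l) with hmlo
  set mhi : Fin n → ℝ := fun j => ∑ l, max (Glo j l * u l) (Ghi j l * u l) with hmhi
  have hm : ∀ j, mlo j ≤ mhi j := fun j =>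
    Finset.sum_le_sum (fun l _ => min_le_max)
  ext v
  simp only [Set.mem_setOf_eq, Set.mem_Icc]
  constructor
  · rintro ⟨a, B, ha, hB, hx, rfl⟩
    have hlo : mlo k ≤ ∑ l, B k l * u l :=
      Finset.sum_le_sum (fun l _ => (mul_bounds _ _ _ _ (hB k l).1 (hB k l).2).1)
    have hhi : ∑ l, B k l * u l ≤ mhi k :=
      Finset.sum_le_sum (fun l _ => (mul_bounds _ _ _ _ (hB k l).1 (hB k l).2).2)
    have hxk := hx k
    constructor
    · rw [hL]
      have e1 : mhi k = ∑ l, max (Glo k l * u l) (Ghi k l * u l) := rfl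
      exact max_le (ha k).1 (by rw [← e1]; linarith)
    · rw [hU]
      have e2 : mlo k = ∑ l, min (Glo k l * u l) (Ghi k l * u l) := rfl
      exact le_min (ha k).2 (by rw [← e2]; linarith)
  · rintro ⟨hv1, hv2⟩
    set a : Fin n → ℝ := fun j => if j = k then v else L j with haa
    have haLU : ∀ j, L j ≤ a j ∧ a j ≤ U j := by
      intro j
      by_cases h : j = k
      · subst h; simp [haa]; exact ⟨hv1, hv2⟩
      · simp [haa, h]; exact hLU j
    have haF : ∀ j, Flo j ≤ a j ∧ a j ≤ Fhi j := by
      intro j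
      refine ⟨le_trans ?_ (haLU j).1, le_trans (haLU j).2 ?_⟩
      · rw [hL]; exact le_max_left _ _
      · rw [hU]; exact min_le_left _ _
    set s : Fin n → ℝ := fun j => xdot j - a j with hss
    have hs : ∀ j, mlo j ≤ s j ∧ s j ≤ mhi j := by
      intro j
      have h1 : L j ≤ a j := (haLU j).1
      have h2 : a j ≤ U j := (haLU j).2
      rw [hL] at h1; rw [hU] at h2
      have h1' := le_trans (le_max_right _ _) h1
      have h2' := le_trans h2 (min_le_right _ _)
      have e1 : mhi j = ∑ l, max (Glo j l * u l) (Ghi j l * u l) := rfl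
      have e2 : mlo j = ∑ l, min (Glo j l * u l) (Ghi j l * u l) := rfl
      rw [← e1] at h1'; rw [← e2] at h2'
      constructor <;> simp only [hss] <;> linarith
    set t : Fin n → ℝ := fun j =>
      if mhi j = mlo j then 0 else (s j - mlo j) / (mhi j - mlo j) with htt
    have ht : ∀ j, 0 ≤ t j ∧ t j ≤ 1 ∧ mlo j + t j * (mhi j - mlo j) = s j := by
      intro j
      by_cases h : mhi j = mlo j
      · have := (hs j).1
        have := (hs j).2
        simp only [htt, h, if_pos]
        refine ⟨le_refl _, zero_le_one, by simp; linarith⟩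
      · have hlt : mlo j < mhi j := lt_of_le_of_ne (hm j) (fun e => h e.symm)
        have hne : mhi j - mlo j ≠ 0 := by linarith
        simp only [htt, if_neg h]
        refine ⟨div_nonneg (by linarith [(hs j).1]) (by linarith),
          (div_le_one (by linarith)).2 (by linarith [(hs j).2]), ?_⟩
        field_simp
        ring
    set cmin : Fin n → Fin m → ℝ := fun j l =>
      if Glo j l * u l ≤ Ghi j l * u l then Glo j l else Ghi j l with hcmin
    set cmax : Fin n → Fin m → ℝ := fun j l =>
      if Glo j l * u l ≤ Ghi j l * u l then Ghi j l else Glo j l with hcmax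
    have hcb : ∀ j l, (Glo j l ≤ cmin j l ∧ cmin j l ≤ Ghi j l) ∧
        (Glo j l ≤ cmax j l ∧ cmax j l ≤ Ghi j l) := by
      intro j l
      simp only [hcmin, hcmax]
      split_ifs <;> refine ⟨⟨?_, ?_⟩, ?_, ?_⟩ <;>
        first | exact le_refl _ | exact hG j l
    have hcmul : ∀ j l, cmin j l * u l = min (Glo j l * u l) (Ghi j l * u l) ∧
        cmax j l * u l = max (Glo j l * u l) (Ghi j l * u l) := by
      intro j l
      simp only [hcmin, hcmax]
      split_ifs with h
      · rw [min_eq_left h, max_eq_right h]; exact ⟨rfl, rfl⟩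
      · rw [min_eq_right (le_of_not_ge h), max_eq_left (le_of_not_ge h)]
        exact ⟨rfl, rfl⟩
    set B : Fin n → Fin m → ℝ := fun j l =>
      (1 - t j) * cmin j l + t j * cmax j l with hBB
    refine ⟨a, B, haF, ?_, ?_, by simp [haa]⟩
    · intro j l
      have h0 := (ht j).1
      have h1 := (ht j).2.1
      have c1 := (hcb j l).1
      have c2 := (hcb j l).2
      constructor <;> simp only [hBB] <;> nlinarith [c1.1, c1.2, c2.1, c2.2]
    · intro j
      have : ∑ l, B j l * u l = s j := by
        have : ∀ l, B j l * u l =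
            (1 - t j) * (min (Glo j l * u l) (Ghi j l * u l)) +
            t j * (max (Glo j l * u l) (Ghi j l * u l)) := by
          intro l
          simp only [hBB]
          rw [add_mul, mul_assoc, mul_assoc, (hcmul j l).1, (hcmul j l).2]
        rw [Finset.sum_congr rfl (fun l _ => this l)]
        rw [Finset.sum_add_distrib, ← Finset.mul_sum, ← Finset.mul_sum]
        have e1 : mlo j = ∑ l, min (Glo j l * u l) (Ghi j l * u l) := rfl
        have e2 : mhi j = ∑ l, max (Glo j l * u l) (Ghi j l * u l) := rfl
        rw [← e1, ← e2]
        linear_combination (ht j).2.2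
      rw [this]
      simp [hss]
end

section
/- Let n, m ≥ 1, X ⊆ ℝⁿ, f : X → ℝⁿ and G : X → ℝ^{n×m} with componentwise Lipschitz bounds: |f_k(x) − f_k(y)| ≤ L_{f,k}·‖x − y‖₂ and |G_{k,l}(x) − G_{k,l}(y)| ≤ L_{G,k,l}·‖x − y‖₂ for all x, y ∈ X, all k ∈ {1,…,n}, l ∈ {1,…,m}, where ‖·‖₂ is the Euclidean norm. Let I be a finite index set and for each i ∈ I let x_i ∈ X, lo^f_i ≤ hi^f_i in ℝⁿ and lo^G_i ≤ hi^G_i in ℝ^{n×m} with lo^f_{i,k} ≤ f_k(x_i) ≤ hi^f_{i,k} and lo^G_{i,k,l} ≤ G_{k,l}(x_i) ≤ hi^G_{i,k,l}. Let x : ℝ → X and u : ℝ → ℝᵐ, and suppose that at some time t the function x is differentiable with derivative ẋ(t) = f(x(t)) + G(x(t))·u(t). Then there exist a ∈ ℝⁿ and B ∈ ℝ^{n×m} with ẋ(t) = a + B·u(t), such that for every i ∈ I, k, l: lo^f_{i,k} − L_{f,k}·‖x(t) − x_i‖₂ ≤ a_k ≤ hi^f_{i,k} + L_{f,k}·‖x(t)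 − x_i‖₂ and lo^G_{i,k,l} − L_{G,k,l}·‖x(t) − x_i‖₂ ≤ B_{k,l} ≤ hi^G_{i,k,l} + L_{G,k,l}·‖x(t) − x_i‖₂. -/
open Finset

theorem data_driven_differential_inclusion (n m : ℕ) (hn : 1 ≤ n) (hm : 1 ≤ m)
    (ι : Type*) (I : Finset ι)
    (X : Set (Fin n → ℝ))
    (f : (Fin n → ℝ) → Fin n → ℝ) (G : (Fin n → ℝ) → Fin n → Fin m → ℝ)
    (Lf : Fin n → ℝ) (LG : Fin n → Fin m → ℝ)
    (hLipf : ∀ x ∈ X, ∀ y ∈ X, ∀ k,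
      |f x k - f y k| ≤ Lf k * Real.sqrt (∑ j, (x j - y j) ^ 2))
    (hLipG : ∀ x ∈ X, ∀ y ∈ X, ∀ k l,
      |G x k l - G y k l| ≤ LG k l * Real.sqrt (∑ j, (x j - y j) ^ 2))
    (xs : ι → Fin n → ℝ) (lof hif : ι → Fin n → ℝ) (loG hiG : ι → Fin n → Fin m → ℝ)
    (hxs : ∀ i ∈ I, xs i ∈ X)
    (hloh : ∀ i ∈ I, ∀ k, lof i k ≤ hif i k)
    (hlohG : ∀ i ∈ I, ∀ k l, loG i k l ≤ hiG i k l)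
    (hencf : ∀ i ∈ I, ∀ k, lof i k ≤ f (xs i) k ∧ f (xs i) k ≤ hif i k)
    (hencG : ∀ i ∈ I, ∀ k l, loG i k l ≤ G (xs i) k l ∧ G (xs i) k l ≤ hiG i k l)
    (x : ℝ → Fin n → ℝ) (u : ℝ → Fin m → ℝ) (t : ℝ)
    (hxX : ∀ s, x s ∈ X)
    (xdot : Fin n → ℝ)
    (hderiv : HasDerivAt x xdot t)
    (hdyn : xdot = fun k => f (x t) k + ∑ l, G (x t) k l * u t l) :
    ∃ (a : Fin n → ℝ) (B : Fin n → Fin m → ℝ),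
      (∀ k, xdot k = a k + ∑ l, B k l * u t l) ∧
      (∀ i ∈ I, ∀ k,
        lof i k - Lf k * Real.sqrt (∑ j, (x t j - xs i j) ^ 2) ≤ a k ∧
        a k ≤ hif i k + Lf k * Real.sqrt (∑ j, (x t j - xs i j) ^ 2)) ∧
      (∀ i ∈ I, ∀ k l,
        loG i k l - LG k l * Real.sqrt (∑ j, (x t j - xs i j) ^ 2) ≤ B k l ∧
        B k l ≤ hiG i k l + LG k l * Real.sqrt (∑ j, (x t j - xs i j) ^ 2)) := by
  refine ⟨f (x t), G (x t), fun k => by rw [hdyn], ?_, ?_⟩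
  · intro i hi k
    have hlip := hLipf (x t) (hxX t) (xs i) (hxs i hi) k
    have henc := hencf i hi k
    have := abs_sub_abs_le_abs_sub (f (x t) k) (f (xs i) k)
    constructor
    · nlinarith [abs_le.mp hlip, neg_abs_le (f (x t) k - f (xs i) k), le_abs_self (f (x t) k - f (xs i) k)]
    · nlinarith [neg_abs_le (f (x t) k - f (xs i) k), le_abs_self (f (x t) k - f (xs i) k)]
  · intro i hi k l
    have hlip := hLipG (x t) (hxX t) (xs i) (hxs i hi) k l
    have henc := hencG i hi k l
    constructor
    · nlinarith [neg_abs_le (G (x t) k l - G (xs i) k l), le_abs_self (G (x t) k l - G (xs i) k l)]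
    · nlinarith [neg_abs_le (G (x t) k l - G (xs i) k l), le_abs_self (G (x t) k l - G (xs i) k l)]
end

section
/- Let n, m ≥ 1, let f : ℝⁿ → ℝⁿ and G : ℝⁿ → ℝ^{n×m} be continuous with componentwise Lipschitz bounds: |f_k(x) − f_k(y)| ≤ L_{f,k}·‖x − y‖₂ and |G_{k,l}(x) − G_{k,l}(y)| ≤ L_{G,k,l}·‖x − y‖₂ for all x, y ∈ ℝⁿ and all k, l, where ‖·‖₂ is the Euclidean norm. Let t_i ∈ ℝ, Δt > 0, and let u : ℝ → ℝᵐ be continuous on [t_i, t_i + Δt] with |u_l(s)| ≤ V_l for all s ∈ [t_i, t_i + Δt] and all l. Let x : ℝ → ℝⁿ be differentiable at every t ∈ [t_i, t_i + Δt] with ẋ(t) = f(x(t)) + G(x(t))·u(t). Define β = sqrt( Σ_{k=1}^n ( L_{f,k} + Σ_{l=1}^m L_{G,k,l}·V_l )² ) and assume β > 0, and define α ∈ ℝⁿ by α_k = |f_k(x(t_i))| + Σ_{l=1}^m |G_{k,l}(x(t_i))|·V_l. Then for all t ∈ [t_i, t_i + Δt]: ‖x(t) − x(t_i)‖₂ ≤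 (‖α‖₂ / β)·(exp(β·Δt) − 1). -/
open Finset

theorem trajectory_variation (n m : ℕ) (hn : 1 ≤ n) (hm : 1 ≤ m)
    (f : (Fin n → ℝ) → Fin n → ℝ) (G : (Fin n → ℝ) → Fin n → Fin m → ℝ)
    (hfc : Continuous f) (hGc : Continuous G)
    (Lf : Fin n → ℝ) (LG : Fin n → Fin m → ℝ)
    (hLipf : ∀ x y : Fin n → ℝ, ∀ k,
      |f x k - f y k| ≤ Lf k * Real.sqrt (∑ j, (x j - y j) ^ 2))
    (hLipG : ∀ x y : Fin n → ℝ, ∀ k l,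
      |G x k l - G y k l| ≤ LG k l * Real.sqrt (∑ j, (x j - y j) ^ 2))
    (ti Δt : ℝ) (hΔt : 0 < Δt)
    (u : ℝ → Fin m → ℝ) (huc : ContinuousOn u (Set.Icc ti (ti + Δt)))
    (V : Fin m → ℝ) (hV : ∀ s ∈ Set.Icc ti (ti + Δt), ∀ l, |u s l| ≤ V l)
    (x : ℝ → Fin n → ℝ)
    (hx : ∀ t ∈ Set.Icc ti (ti + Δt),
      HasDerivAt x (fun k => f (x t) k + ∑ l, G (x t) k l * u t l) t)
    (β : ℝ) (hβdef : β = Real.sqrt (∑ k, (Lf k + ∑ l, LG k l * V l) ^ 2)) (hβ : 0 < β)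
    (α : Fin n → ℝ)
    (hα : ∀ k, α k = |f (x ti) k| + ∑ l, |G (x ti) k l| * V l) :
    ∀ t ∈ Set.Icc ti (ti + Δt),
      Real.sqrt (∑ i, (x t i - x ti i) ^ 2) ≤
        (Real.sqrt (∑ k, (α k) ^ 2) / β) * (Real.exp (β * Δt) - 1) := by
  have hti_mem : ti ∈ Set.Icc ti (ti + Δt) := ⟨le_refl _, by linarith⟩
  have hVnn : ∀ l, 0 ≤ V l := fun l => (abs_nonneg _).trans (hV ti hti_mem l)
  set A : ℝ := Real.sqrt (∑ k, (α k) ^ 2) with hA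
  have hAnn : 0 ≤ A := Real.sqrt_nonneg _
  set c : Fin n → ℝ := fun k => Lf k + ∑ l, LG k l * V l with hc
  -- Euclidean space setup
  set e : EuclideanSpace ℝ (Fin n) ≃L[ℝ] (Fin n → ℝ) :=
    PiLp.continuousLinearEquiv 2 ℝ (fun _ : Fin n => ℝ) with he
  have hnorm : ∀ v : Fin n → ℝ,
      ‖e.symm v‖ = Real.sqrt (∑ i, (v i) ^ 2) := by
    intro v
    rw [EuclideanSpace.norm_eq]
    congr 1
    refine Finset.sum_congr rfl fun i _ => ?_
    rw [Real.norm_eq_abs, sq_abs]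
    rfl
  set φ : ℝ → EuclideanSpace ℝ (Fin n) :=
    fun s => e.symm (fun i => x s i - x ti i) with hφ
  set φ' : ℝ → EuclideanSpace ℝ (Fin n) :=
    fun s => e.symm (fun k => f (x s) k + ∑ l, G (x s) k l * u s l) with hφ'
  have hderiv : ∀ s ∈ Set.Icc ti (ti + Δt), HasDerivAt φ (φ' s) s := by
    intro s hs
    have h1 : HasDerivAt (fun s => (fun i => x s i - x ti i : Fin n → ℝ))
        (fun k => f (x s) k + ∑ l, G (x s) k l * u s l) s := by
      have := (hx s hs).sub_const (x ti)
      exact this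
    exact (e.symm.toContinuousLinearMap.hasFDerivAt.comp_hasDerivAt s h1)
  have hcont : ContinuousOn φ (Set.Icc ti (ti + Δt)) :=
    fun s hs => ((hderiv s hs).continuousAt).continuousWithinAt
  -- the bound on the derivative
  have hbound : ∀ s ∈ Set.Icc ti (ti + Δt), ‖φ' s‖ ≤ β * ‖φ s‖ + A := by
    intro s hs
    set r : ℝ := ‖φ s‖ with hr
    have hrnn : 0 ≤ r := norm_nonneg _
    have hrs : r = Real.sqrt (∑ j, (x s j - x ti j) ^ 2) := hnorm _
    have hcomp : ∀ k, |f (x s) k + ∑ l, G (x s) k l * u s l| ≤ α k + c k * r := by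
      intro k
      have h1 : |f (x s) k| ≤ |f (x ti) k| + Lf k * r := by
        have := hLipf (x s) (x ti) k
        rw [← hrs] at this
        calc |f (x s) k| ≤ |f (x s) k - f (x ti) k| + |f (x ti) k| := by
              have := abs_sub_abs_le_abs_sub (f (x s) k) (f (x ti) k); linarith [abs_nonneg (f (x s) k - f (x ti) k)]
          _ ≤ |f (x ti) k| + Lf k * r := by linarith
      have h2 : ∀ l, |G (x s) k l * u s l| ≤ (|G (x ti) k l| + LG k l * r) * V l := by
        intro l
        rw [abs_mul]
        have hG : |G (x s) k l| ≤ |G (x ti) k l| + LG k l * r := by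
          have := hLipG (x s) (x ti) k l
          rw [← hrs] at this
          have h := abs_sub_abs_le_abs_sub (G (x s) k l) (G (x ti) k l)
          linarith
        have hu := hV s hs l
        have hGnn : 0 ≤ |G (x ti) k l| + LG k l * r :=
          le_trans (abs_nonneg _) hG
        exact mul_le_mul hG hu (abs_nonneg _) hGnn
      calc |f (x s) k + ∑ l, G (x s) k l * u s l|
          ≤ |f (x s) k| + |∑ l, G (x s) k l * u s l| := abs_add_le _ _
        _ ≤ |f (x s) k| + ∑ l, |G (x s) k l * u s l| := by
            gcongr; exact Finset.abs_sum_le_sum_abs _ _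
        _ ≤ (|f (x ti) k| + Lf k * r) + ∑ l, (|G (x ti) k l| + LG k l * r) * V l :=
            add_le_add h1 (Finset.sum_le_sum fun l _ => h2 l)
        _ = α k + c k * r := by
            have hsum : ∑ l, (|G (x ti) k l| + LG k l * r) * V l
                = (∑ l, |G (x ti) k l| * V l) + (∑ l, LG k l * V l) * r := by
              rw [Finset.sum_mul, ← Finset.sum_add_distrib]
              exact Finset.sum_congr rfl fun l _ => by ring
            rw [hsum, hα k, hc]
            ring
    have hstep1 : ‖φ' s‖ ≤ ‖e.symm (fun k => α k + c k * r)‖ := by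
      rw [hnorm, hnorm]
      apply Real.sqrt_le_sqrt
      refine Finset.sum_le_sum fun k _ => ?_
      have h := hcomp k
      have hnn : 0 ≤ α k + c k * r := le_trans (abs_nonneg _) h
      calc (f (x s) k + ∑ l, G (x s) k l * u s l) ^ 2
          = |f (x s) k + ∑ l, G (x s) k l * u s l| ^ 2 := (sq_abs _).symm
        _ ≤ (α k + c k * r) ^ 2 := by
            apply pow_le_pow_left₀ (abs_nonneg _) h _
    have hsplit : (e.symm (fun k => α k + c k * r) : EuclideanSpace ℝ (Fin n))
        = e.symm α + r • e.symm c := by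
      apply e.injective
      simp only [ContinuousLinearEquiv.apply_symm_apply, map_add, map_smul]
      funext k
      simp only [ContinuousLinearEquiv.apply_symm_apply, Pi.add_apply, Pi.smul_apply,
        smul_eq_mul]
      ring
    have hβeq : ‖(e.symm c : EuclideanSpace ℝ (Fin n))‖ = β := by
      rw [hnorm, hβdef]
    have hAeq : ‖(e.symm α : EuclideanSpace ℝ (Fin n))‖ = A := by
      rw [hnorm, hA]
    calc ‖φ' s‖ ≤ ‖(e.symm (fun k => α k + c k * r) : EuclideanSpace ℝ (Fin n))‖ := hstep1
      _ = ‖e.symm α + r • e.symm c‖ := by rw [hsplit]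
      _ ≤ ‖(e.symm α : EuclideanSpace ℝ (Fin n))‖ + ‖r • (e.symm c : EuclideanSpace ℝ (Fin n))‖ := norm_add_le _ _
      _ = A + r * β := by rw [hAeq, norm_smul, Real.norm_eq_abs, abs_of_nonneg hrnn, hβeq]
      _ = β * ‖φ s‖ + A := by rw [hr]; ring
  have hφti : ‖φ ti‖ ≤ 0 := by
    have : φ ti = 0 := by
      apply e.injective
      simp only [hφ, ContinuousLinearEquiv.apply_symm_apply, map_zero]
      funext k; simp
    rw [this, norm_zero]
  have hgron := norm_le_gronwallBound_of_norm_deriv_right_le hcont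
    (fun s hs => (hderiv s (Set.Ico_subset_Icc_self hs)).hasDerivWithinAt)
    hφti (fun s hs => hbound s (Set.Ico_subset_Icc_self hs))
  intro t ht
  have h := hgron t ht
  rw [gronwallBound_of_K_ne_0 hβ.ne'] at h
  have hLHS : Real.sqrt (∑ i, (x t i - x ti i) ^ 2) = ‖φ t‖ := (hnorm _).symm
  rw [hLHS]
  have hmono : Real.exp (β * (t - ti)) ≤ Real.exp (β * Δt) := by
    apply Real.exp_le_exp.mpr
    have : t - ti ≤ Δt := by linarith [ht.2]
    nlinarith
  calc ‖φ t‖ ≤ 0 * Real.exp (β * (t - ti)) + A / β * (Real.exp (β * (t - ti)) - 1) := h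
    _ = A / β * (Real.exp (β * (t - ti)) - 1) := by ring
    _ ≤ A / β * (Real.exp (β * Δt) - 1) := by
        apply mul_le_mul_of_nonneg_left (by linarith) (div_nonneg hAnn hβ.le)
end

section
/- Let n, m ≥ 1, and let f : ℝⁿ → ℝⁿ and G : ℝⁿ → ℝ^{n×m} have componentwise Lipschitz bounds: |f_k(x) − f_k(y)| ≤ L_{f,k}·‖x − y‖₂ and |G_{k,l}(x) − G_{k,l}(y)| ≤ L_{G,k,l}·‖x − y‖₂ for all x, y ∈ ℝⁿ and all k, l, where ‖·‖₂ is the Euclidean norm. Let V ⊆ ℝᵐ and V_l ≥ 0 with |u_l| ≤ V_l for every u ∈ V and every l. Let R = ∏_{k=1}^n [r_lo_k, r_hi_k] with r_lo ≤ r_hi, and let M ≥ 0 satisfy |f_k(x) + Σ_{l=1}^m G_{k,l}(x)·u_l| ≤ M for all x ∈ R, u ∈ V and k. Define β = sqrt( Σ_{k=1}^n ( L_{f,k} + Σ_{l=1}^m L_{G,k,l}·V_l )² ), let Δt > 0 satisfy √n·β·Δt < 1, set μ = Δt·M / (1 − √n·β·Δt) and S = ∏_{k=1}^n [r_lo_k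 − μ, r_hi_k + μ]. Then for every x₀ ∈ R, s ∈ S, u ∈ V and τ ∈ [0, Δt]: x₀ + τ·(f(s) + G(s)·u) ∈ S. -/
open Finset

theorem explicit_rough_enclosure (n m : ℕ) (hn : 1 ≤ n) (hm : 1 ≤ m)
    (f : (Fin n → ℝ) → Fin n → ℝ) (G : (Fin n → ℝ) → Fin n → Fin m → ℝ)
    (Lf : Fin n → ℝ) (LG : Fin n → Fin m → ℝ)
    (hLipf : ∀ x y : Fin n → ℝ, ∀ k,
      |f x k - f y k| ≤ Lf k * Real.sqrt (∑ j, (x j - y j) ^ 2))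
    (hLipG : ∀ x y : Fin n → ℝ, ∀ k l,
      |G x k l - G y k l| ≤ LG k l * Real.sqrt (∑ j, (x j - y j) ^ 2))
    (V : Set (Fin m → ℝ)) (Vb : Fin m → ℝ) (hVb : ∀ l, 0 ≤ Vb l)
    (hVbnd : ∀ u ∈ V, ∀ l, |u l| ≤ Vb l)
    (rlo rhi : Fin n → ℝ) (hr : ∀ k, rlo k ≤ rhi k)
    (M : ℝ) (hM : 0 ≤ M)
    (hMb : ∀ x : Fin n → ℝ, (∀ k, rlo k ≤ x k ∧ x k ≤ rhi k) → ∀ u ∈ V, ∀ k,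
      |f x k + ∑ l, G x k l * u l| ≤ M)
    (β : ℝ) (hβdef : β = Real.sqrt (∑ k, (Lf k + ∑ l, LG k l * Vb l) ^ 2))
    (Δt : ℝ) (hΔt : 0 < Δt) (hstep : Real.sqrt n * β * Δt < 1)
    (μ : ℝ) (hμ : μ = Δt * M / (1 - Real.sqrt n * β * Δt)) :
    ∀ x₀ : Fin n → ℝ, (∀ k, rlo k ≤ x₀ k ∧ x₀ k ≤ rhi k) →
    ∀ s : Fin n → ℝ, (∀ k, rlo k - μ ≤ s k ∧ s k ≤ rhi k + μ) →
    ∀ u ∈ V, ∀ τ ∈ Set.Icc (0 : ℝ) Δt, ∀ k,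
      rlo k - μ ≤ x₀ k + τ * (f s k + ∑ l, G s k l * u l) ∧
      x₀ k + τ * (f s k + ∑ l, G s k l * u l) ≤ rhi k + μ := by
  intro x₀ hx₀ s hs u hu τ hτ k
  have hβ0 : 0 ≤ β := hβdef ▸ Real.sqrt_nonneg _
  have hsn0 : (0:ℝ) ≤ Real.sqrt n := Real.sqrt_nonneg _
  have hden : 0 < 1 - Real.sqrt n * β * Δt := by linarith
  have hμ0 : 0 ≤ μ := by rw [hμ]; positivity
  -- projection of s onto the box R
  set x : Fin n → ℝ := fun j => max (rlo j) (min (s j) (rhi j)) with hxdef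
  have hxR : ∀ j, rlo j ≤ x j ∧ x j ≤ rhi j := by
    intro j
    refine ⟨le_max_left _ _, max_le (hr j) (min_le_right _ _)⟩
  have hdist : ∀ j, |s j - x j| ≤ μ := by
    intro j
    rcases hs j with ⟨h1, h2⟩
    have hj := hr j
    simp only [hxdef]
    rw [abs_le]
    rcases le_total (s j) (rhi j) with h3 | h3
    · rw [min_eq_left h3]
      rcases le_total (rlo j) (s j) with h4 | h4
      · rw [max_eq_right h4]; constructor <;> linarith
      · rw [max_eq_left h4]; constructor <;> linarith
    · rw [min_eq_right h3, max_eq_right hj]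
      constructor <;> linarith
  set D : ℝ := Real.sqrt (∑ j, (s j - x j) ^ 2) with hDdef
  have hD0 : 0 ≤ D := Real.sqrt_nonneg _
  have hD : D ≤ Real.sqrt n * μ := by
    have h1 : (∑ j, (s j - x j) ^ 2) ≤ (n : ℝ) * μ ^ 2 := by
      calc ∑ j, (s j - x j) ^ 2 ≤ ∑ _j : Fin n, μ ^ 2 := by
            refine sum_le_sum fun j _ => ?_
            nlinarith [hdist j, abs_nonneg (s j - x j), sq_abs (s j - x j)]
        _ = (n : ℝ) * μ ^ 2 := by simp [mul_comm]
    calc D ≤ Real.sqrt ((n : ℝ) * μ ^ 2) := Real.sqrt_le_sqrt h1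
      _ = Real.sqrt n * μ := by
          rw [Real.sqrt_mul (by positivity), Real.sqrt_sq hμ0]
  have hβk : Lf k + ∑ l, LG k l * Vb l ≤ β := by
    have h1 : (Lf k + ∑ l, LG k l * Vb l) ^ 2
        ≤ ∑ k', (Lf k' + ∑ l, LG k' l * Vb l) ^ 2 :=
      single_le_sum (f := fun k' => (Lf k' + ∑ l, LG k' l * Vb l) ^ 2)
        (fun i _ => sq_nonneg _) (mem_univ k)
    calc Lf k + ∑ l, LG k l * Vb l ≤ |Lf k + ∑ l, LG k l * Vb l| := le_abs_self _
      _ = Real.sqrt ((Lf k + ∑ l, LG k l * Vb l) ^ 2) := (Real.sqrt_sq_eq_abs _).symm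
      _ ≤ β := by rw [hβdef]; exact Real.sqrt_le_sqrt h1
  have hMx := hMb x hxR u hu k
  have hlip : |(f s k + ∑ l, G s k l * u l) - (f x k + ∑ l, G x k l * u l)| ≤ β * D := by
    have hsub : ∑ l, (G s k l - G x k l) * u l
        = (∑ l, G s k l * u l) - ∑ l, G x k l * u l := by
      rw [← Finset.sum_sub_distrib]
      exact Finset.sum_congr rfl fun l _ => by ring
    have heq : (f s k + ∑ l, G s k l * u l) - (f x k + ∑ l, G x k l * u l)
        = (f s k - f x k) + ∑ l, (G s k l - G x k l) * u l := by
      rw [hsub]; ring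
    rw [heq]
    have h1 : |(f s k - f x k) + ∑ l, (G s k l - G x k l) * u l|
        ≤ |f s k - f x k| + ∑ l, |(G s k l - G x k l) * u l| :=
      (abs_add_le _ _).trans (by gcongr; exact Finset.abs_sum_le_sum_abs _ _)
    have h2 : ∑ l, |(G s k l - G x k l) * u l| ≤ ∑ l, LG k l * Vb l * D := by
      refine sum_le_sum fun l _ => ?_
      rw [abs_mul]
      have hg := hLipG s x k l
      have hul := hVbnd u hu l
      calc |G s k l - G x k l| * |u l| ≤ (LG k l * D) * Vb l :=
            mul_le_mul hg hul (abs_nonneg _) (le_trans (abs_nonneg _) hg)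
        _ = LG k l * Vb l * D := by ring
    have h3 : |f s k - f x k| ≤ Lf k * D := hLipf s x k
    have h4 : (∑ l, LG k l * Vb l * D) = (∑ l, LG k l * Vb l) * D := by
      rw [Finset.sum_mul]
    have h5 : Lf k * D + (∑ l, LG k l * Vb l) * D = (Lf k + ∑ l, LG k l * Vb l) * D := by
      ring
    have h6 : (Lf k + ∑ l, LG k l * Vb l) * D ≤ β * D :=
      mul_le_mul_of_nonneg_right hβk hD0
    linarith [h1, h2, h3]
  have hbound : |f s k + ∑ l, G s k l * u l| ≤ M + β * (Real.sqrt n * μ) := by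
    have hβD : β * D ≤ β * (Real.sqrt n * μ) := mul_le_mul_of_nonneg_left hD hβ0
    calc |f s k + ∑ l, G s k l * u l|
        ≤ |f x k + ∑ l, G x k l * u l|
          + |(f s k + ∑ l, G s k l * u l) - (f x k + ∑ l, G x k l * u l)| := by
          have := abs_sub_abs_le_abs_sub (f s k + ∑ l, G s k l * u l)
            (f x k + ∑ l, G x k l * u l)
          linarith [abs_sub_abs_le_abs_sub (f s k + ∑ l, G s k l * u l)
            (f x k + ∑ l, G x k l * u l)]
      _ ≤ M + β * (Real.sqrt n * μ) := by linarith
  have hμeq : μ * (1 - Real.sqrt n * β * Δt) = Δt * M := by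
    rw [hμ]; exact div_mul_cancel₀ _ hden.ne'
  have hτh : |τ * (f s k + ∑ l, G s k l * u l)| ≤ μ := by
    rcases hτ with ⟨hτ0, hτΔ⟩
    rw [abs_mul, abs_of_nonneg hτ0]
    have hB0 : 0 ≤ M + β * (Real.sqrt n * μ) := by positivity
    calc τ * |f s k + ∑ l, G s k l * u l|
        ≤ Δt * (M + β * (Real.sqrt n * μ)) :=
          mul_le_mul hτΔ hbound (abs_nonneg _) (le_of_lt hΔt)
      _ = μ := by nlinarith [hμeq]
  rcases hx₀ k with ⟨ha, hb⟩
  rw [abs_le] at hτh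
  constructor <;> linarith [hτh.1, hτh.2]
end

section
/- Let n, m ≥ 1, and let f : ℝⁿ → ℝⁿ and G : ℝⁿ → ℝ^{n×m} have componentwise Lipschitz bounds L_{f,k}, L_{G,k,l} with respect to the Euclidean norm ‖·‖₂ on ℝⁿ. Let V ⊆ ℝᵐ and V_l ≥ 0 with |u_l| ≤ V_l for every u ∈ V, and let U_l ≥ V_l for all l. Let R = ∏_{k=1}^n [r_lo_k, r_hi_k] with r_lo ≤ r_hi, and M ≥ 0 with |f_k(x) + Σ_l G_{k,l}(x)·u_l| ≤ M for all x ∈ R, u ∈ V, k. Define β = sqrt( Σ_k ( L_{f,k} + Σ_l L_{G,k,l}·V_l )² ) and β_∞ = sqrt( Σ_k ( L_{f,k} + Σ_l L_{G,k,l}·U_l )² ). If Δt > 0 satisfies √n·β_∞·Δt < 1, then with μ = Δt·M / (1 − √n·β·Δt) and S = ∏_k [r_lo_k − μ, r_hi_k + μ], for every x₀ ∈ R, s ∈ S, u ∈ V and τ ∈ [0, Δt]: x₀ + τ·(f(s) + G(s)·u) ∈ S. -/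
open Finset

theorem explicit_rough_enclosure_global_bound (n m : ℕ) (hn : 1 ≤ n) (hm : 1 ≤ m)
    (f : (Fin n → ℝ) → Fin n → ℝ) (G : (Fin n → ℝ) → Fin n → Fin m → ℝ)
    (Lf : Fin n → ℝ) (LG : Fin n → Fin m → ℝ)
    (hLipf : ∀ x y : Fin n → ℝ, ∀ k,
      |f x k - f y k| ≤ Lf k * Real.sqrt (∑ j, (x j - y j) ^ 2))
    (hLipG : ∀ x y : Fin n → ℝ, ∀ k l,
      |G x k l - G y k l| ≤ LG k l * Real.sqrt (∑ j, (x j - y j) ^ 2))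
    (V : Set (Fin m → ℝ)) (Vb : Fin m → ℝ) (hVb : ∀ l, 0 ≤ Vb l)
    (hVbnd : ∀ u ∈ V, ∀ l, |u l| ≤ Vb l)
    (Ub : Fin m → ℝ) (hUb : ∀ l, Vb l ≤ Ub l)
    (rlo rhi : Fin n → ℝ) (hr : ∀ k, rlo k ≤ rhi k)
    (M : ℝ) (hM : 0 ≤ M)
    (hMb : ∀ x : Fin n → ℝ, (∀ k, rlo k ≤ x k ∧ x k ≤ rhi k) → ∀ u ∈ V, ∀ k,
      |f x k + ∑ l, G x k l * u l| ≤ M)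
    (β βinf : ℝ)
    (hβdef : β = Real.sqrt (∑ k, (Lf k + ∑ l, LG k l * Vb l) ^ 2))
    (hβinfdef : βinf = Real.sqrt (∑ k, (Lf k + ∑ l, LG k l * Ub l) ^ 2))
    (Δt : ℝ) (hΔt : 0 < Δt) (hstep : Real.sqrt n * βinf * Δt < 1)
    (μ : ℝ) (hμ : μ = Δt * M / (1 - Real.sqrt n * β * Δt)) :
    ∀ x₀ : Fin n → ℝ, (∀ k, rlo k ≤ x₀ k ∧ x₀ k ≤ rhi k) →
    ∀ s : Fin n → ℝ, (∀ k, rlo k - μ ≤ s k ∧ s k ≤ rhi k + μ) →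
    ∀ u ∈ V, ∀ τ ∈ Set.Icc (0 : ℝ) Δt, ∀ k,
      rlo k - μ ≤ x₀ k + τ * (f s k + ∑ l, G s k l * u l) ∧
      x₀ k + τ * (f s k + ∑ l, G s k l * u l) ≤ rhi k + μ := by
  intro x₀ hx₀ s hs u hu τ hτ k
  have hn' : (1:ℝ) ≤ (n:ℝ) := by exact_mod_cast hn
  have hsqrtn : (0:ℝ) < Real.sqrt n := Real.sqrt_pos.mpr (by linarith)
  -- Lipschitz constants are nonnegative
  have hSn : Real.sqrt (∑ j : Fin n, ((0:ℝ) - 1) ^ 2) = Real.sqrt n := by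
    simp
  have hLf : ∀ k, 0 ≤ Lf k := by
    intro k
    have h := hLipf (fun _ => 0) (fun _ => 1) k
    simp only [hSn] at h
    nlinarith [abs_nonneg (f (fun _ => 0) k - f (fun _ => 1) k)]
  have hLG : ∀ k l, 0 ≤ LG k l := by
    intro k l
    have h := hLipG (fun _ => 0) (fun _ => 1) k l
    simp only [hSn] at h
    nlinarith [abs_nonneg (G (fun _ => 0) k l - G (fun _ => 1) k l)]
  set c : Fin n → ℝ := fun j => Lf j + ∑ l, LG j l * Vb l with hcdef
  have hc : ∀ j, 0 ≤ c j := by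
    intro j
    have : 0 ≤ ∑ l, LG j l * Vb l :=
      Finset.sum_nonneg fun l _ => mul_nonneg (hLG j l) (hVb l)
    have := hLf j
    simp only [hcdef]
    linarith
  have hβ0 : 0 ≤ β := hβdef ▸ Real.sqrt_nonneg _
  have hcβ : ∀ j, c j ≤ β := by
    intro j
    have h1 : (c j) ^ 2 ≤ ∑ i, (c i) ^ 2 :=
      Finset.single_le_sum (f := fun i => (c i) ^ 2) (fun i _ => sq_nonneg _) (mem_univ j)
    calc c j = Real.sqrt ((c j) ^ 2) := (Real.sqrt_sq (hc j)).symm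
      _ ≤ β := by rw [hβdef]; exact Real.sqrt_le_sqrt h1
  have hββinf : β ≤ βinf := by
    rw [hβdef, hβinfdef]
    apply Real.sqrt_le_sqrt
    apply Finset.sum_le_sum
    intro i _
    have h1 : ∑ l, LG i l * Vb l ≤ ∑ l, LG i l * Ub l :=
      Finset.sum_le_sum fun l _ => mul_le_mul_of_nonneg_left (hUb l) (hLG i l)
    have h2 : Lf i + ∑ l, LG i l * Vb l ≤ Lf i + ∑ l, LG i l * Ub l := by linarith
    exact pow_le_pow_left₀ (hc i) h2 2
  have hD : Real.sqrt n * β * Δt < 1 := by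
    have : Real.sqrt n * β * Δt ≤ Real.sqrt n * βinf * Δt := by
      apply mul_le_mul_of_nonneg_right _ hΔt.le
      exact mul_le_mul_of_nonneg_left hββinf hsqrtn.le
    linarith
  have hDpos : 0 < 1 - Real.sqrt n * β * Δt := by linarith
  have hμ0 : 0 ≤ μ := by
    rw [hμ]
    exact div_nonneg (mul_nonneg hΔt.le hM) hDpos.le
  have hμeq : μ * (1 - Real.sqrt n * β * Δt) = Δt * M := by
    rw [hμ]
    exact div_mul_cancel₀ _ hDpos.ne'
  -- clamp s into the box
  set x : Fin n → ℝ := fun j => max (rlo j) (min (s j) (rhi j)) with hxdef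
  have hxR : ∀ j, rlo j ≤ x j ∧ x j ≤ rhi j := fun j =>
    ⟨le_max_left _ _, max_le (hr j) (min_le_right _ _)⟩
  have hdiff : ∀ j, |s j - x j| ≤ μ := by
    intro j
    obtain ⟨h1, h2⟩ := hs j
    rw [abs_le]
    rcases le_total (s j) (rhi j) with h | h
    · rcases le_total (s j) (rlo j) with h' | h'
      · have hx : x j = rlo j := by
          simp only [hxdef]
          rw [min_eq_left h, max_eq_left h']
        rw [hx]; constructor <;> linarith
      · have hx : x j = s j := by
          simp only [hxdef]
          rw [min_eq_left h, max_eq_right h']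
        rw [hx]; constructor <;> linarith
    · have hx : x j = rhi j := by
        simp only [hxdef]
        rw [min_eq_right h, max_eq_right (hr j)]
      rw [hx]; constructor <;> linarith
  set N : ℝ := Real.sqrt (∑ j, (s j - x j) ^ 2) with hNdef
  have hN0 : 0 ≤ N := Real.sqrt_nonneg _
  have hNle : N ≤ Real.sqrt n * μ := by
    have h1 : ∑ j, (s j - x j) ^ 2 ≤ (n : ℝ) * μ ^ 2 := by
      calc ∑ j, (s j - x j) ^ 2 ≤ ∑ _j : Fin n, μ ^ 2 := by
            apply Finset.sum_le_sum
            intro j _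
            obtain ⟨ha, hb⟩ := abs_le.mp (hdiff j)
            exact sq_le_sq' ha hb
        _ = (n : ℝ) * μ ^ 2 := by simp [mul_comm]
    calc N ≤ Real.sqrt ((n : ℝ) * μ ^ 2) := Real.sqrt_le_sqrt h1
      _ = Real.sqrt n * μ := by
          rw [Real.sqrt_mul (by positivity), Real.sqrt_sq hμ0]
  -- bound the vector field at s
  have hhx : |f x k + ∑ l, G x k l * u l| ≤ M := hMb x hxR u hu k
  have hfdiff : |f s k - f x k| ≤ Lf k * N := hLipf s x k
  have hGdiff : |∑ l, (G s k l - G x k l) * u l| ≤ (∑ l, LG k l * Vb l) * N := by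
    calc |∑ l, (G s k l - G x k l) * u l|
        ≤ ∑ l, |(G s k l - G x k l) * u l| := Finset.abs_sum_le_sum_abs _ _
      _ ≤ ∑ l, (LG k l * Vb l) * N := by
          apply Finset.sum_le_sum
          intro l _
          rw [abs_mul]
          calc |G s k l - G x k l| * |u l|
              ≤ (LG k l * N) * Vb l :=
                mul_le_mul (hLipG s x k l) (hVbnd u hu l) (abs_nonneg _)
                  (mul_nonneg (hLG k l) hN0)
            _ = (LG k l * Vb l) * N := by ring
      _ = (∑ l, LG k l * Vb l) * N := by rw [← Finset.sum_mul]
  have hsplit : f s k + ∑ l, G s k l * u l =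
      (f x k + ∑ l, G x k l * u l) + (f s k - f x k) +
        (∑ l, (G s k l - G x k l) * u l) := by
    have : ∑ l, (G s k l - G x k l) * u l =
        (∑ l, G s k l * u l) - ∑ l, G x k l * u l := by
      rw [← Finset.sum_sub_distrib]
      apply Finset.sum_congr rfl
      intro l _
      ring
    rw [this]; ring
  have hkey : |f s k + ∑ l, G s k l * u l| ≤ M + β * (Real.sqrt n * μ) := by
    have habs : |f s k + ∑ l, G s k l * u l| ≤
        M + Lf k * N + (∑ l, LG k l * Vb l) * N := by
      rw [hsplit]
      calc |(f x k + ∑ l, G x k l * u l) + (f s k - f x k) +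
            (∑ l, (G s k l - G x k l) * u l)|
          ≤ |(f x k + ∑ l, G x k l * u l) + (f s k - f x k)| +
            |∑ l, (G s k l - G x k l) * u l| := abs_add_le _ _
        _ ≤ |f x k + ∑ l, G x k l * u l| + |f s k - f x k| +
            |∑ l, (G s k l - G x k l) * u l| := by
              have := abs_add_le (f x k + ∑ l, G x k l * u l) (f s k - f x k)
              linarith
        _ ≤ M + Lf k * N + (∑ l, LG k l * Vb l) * N := by linarith
    have hcN : c k * N ≤ β * (Real.sqrt n * μ) :=
      mul_le_mul (hcβ k) hNle hN0 hβ0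
    have : Lf k * N + (∑ l, LG k l * Vb l) * N = c k * N := by
      simp only [hcdef]; ring
    linarith
  obtain ⟨hτ0, hτΔt⟩ := hτ
  have hτabs : |τ * (f s k + ∑ l, G s k l * u l)| ≤ μ := by
    rw [abs_mul, abs_of_nonneg hτ0]
    have h1 : τ * |f s k + ∑ l, G s k l * u l| ≤
        Δt * (M + β * (Real.sqrt n * μ)) :=
      mul_le_mul hτΔt hkey (abs_nonneg _) hΔt.le
    have h2 : Δt * (M + β * (Real.sqrt n * μ)) = μ := by
      linarith [hμeq]
    linarith
  obtain ⟨ha, hb⟩ := abs_le.mp hτabs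
  obtain ⟨hx1, hx2⟩ := hx₀ k
  constructor <;> linarith
end

section
/- Let n, m ≥ 1, S ⊆ ℝⁿ, and let f : ℝⁿ → ℝⁿ and G : ℝⁿ → ℝ^{n×m} be differentiable on an open set containing S, with |∂f_k/∂x_p(s)| ≤ L_{f,k}, |∂G_{k,l}/∂x_p(s)| ≤ L_{G,k,l}, |f_k(s)| ≤ F_k and |G_{k,l}(s)| ≤ Γ_{k,l} for all s ∈ S and all k, p ∈ {1,…,n}, l ∈ {1,…,m}. Let t₀ ∈ ℝ, Δt > 0, and let u : ℝ → ℝᵐ be differentiable on [t₀, t₀ + Δt] with |u_l(t)| ≤ V_l and |u̇_l(t)| ≤ W_l there. Let x : ℝ → ℝⁿ be differentiable on [t₀, t₀ + Δt] with ẋ(t) = f(x(t)) + G(x(t))·u(t) and x(t) ∈ S for all t ∈ [t₀, t₀ + Δt]. Then for every k: | x_k(t₀ + Δt) − x_k(t₀) − Δt·( f_k(x(t₀)) + Σ_{l=1}^m G_{k,l}(x(t₀))·u_l(t₀) ) | ≤ (Δt²/2)·[ ( L_{f,k} + Σ_{l=1}^m L_{G,k,l}·V_l )·Σ_{p=1}^n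 ( F_p + Σ_{l=1}^m Γ_{p,l}·V_l ) + Σ_{l=1}^m Γ_{k,l}·W_l ]. -/
open Finset

/-- A continuous linear functional on `Fin n → ℝ` with coordinate values bounded by `C`,
applied to a vector with entrywise bounds `b`, is bounded by `C * ∑ b`. -/
lemma lin_bound_aux {n : ℕ} (L : (Fin n → ℝ) →L[ℝ] ℝ) (v b : Fin n → ℝ) (C : ℝ)
    (hC : ∀ p, |L (Pi.single p 1)| ≤ C) (hb : ∀ p, |v p| ≤ b p) :
    |L v| ≤ C * ∑ p, b p := by
  have hv : v = ∑ p, v p • (Pi.single p 1 : Fin n → ℝ) := by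
    funext q
    simp [Finset.sum_apply, Pi.single_apply]
  have hLv : L v = ∑ p, v p * L (Pi.single p 1) := by
    conv_lhs => rw [hv]
    rw [map_sum]
    exact Finset.sum_congr rfl fun p _ => by rw [map_smul, smul_eq_mul]
  calc |L v| = |∑ p, v p * L (Pi.single p 1)| := by rw [hLv]
    _ ≤ ∑ p, |v p * L (Pi.single p 1)| := Finset.abs_sum_le_sum_abs _ _
    _ ≤ ∑ p, b p * C := by
        refine Finset.sum_le_sum fun p _ => ?_
        rw [abs_mul]
        exact mul_le_mul (hb p) (hC p) (abs_nonneg _) ((abs_nonneg _).trans (hb p))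
    _ = C * ∑ p, b p := by rw [← Finset.sum_mul, mul_comm]

theorem second_order_taylor_overapprox (n m : ℕ) (hn : 1 ≤ n) (hm : 1 ≤ m)
    (Sset Uo : Set (Fin n → ℝ)) (hUo : IsOpen Uo) (hSU : Sset ⊆ Uo)
    (f : (Fin n → ℝ) → Fin n → ℝ) (G : (Fin n → ℝ) → Fin n → Fin m → ℝ)
    (hfd : ∀ y ∈ Uo, DifferentiableAt ℝ f y)
    (hGd : ∀ y ∈ Uo, DifferentiableAt ℝ G y)
    (Lf F : Fin n → ℝ) (LG Γ : Fin n → Fin m → ℝ)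
    (hpf : ∀ s ∈ Sset, ∀ (k p : Fin n),
      |fderiv ℝ (fun y => f y k) s (Pi.single p (1 : ℝ))| ≤ Lf k)
    (hpG : ∀ s ∈ Sset, ∀ (k : Fin n) (l : Fin m) (p : Fin n),
      |fderiv ℝ (fun y => G y k l) s (Pi.single p (1 : ℝ))| ≤ LG k l)
    (hFb : ∀ s ∈ Sset, ∀ k, |f s k| ≤ F k)
    (hΓb : ∀ s ∈ Sset, ∀ k l, |G s k l| ≤ Γ k l)
    (t₀ Δt : ℝ) (hΔt : 0 < Δt)
    (u udot : ℝ → Fin m → ℝ)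
    (hud : ∀ t ∈ Set.Icc t₀ (t₀ + Δt), HasDerivAt u (udot t) t)
    (V W : Fin m → ℝ)
    (hV : ∀ t ∈ Set.Icc t₀ (t₀ + Δt), ∀ l, |u t l| ≤ V l)
    (hW : ∀ t ∈ Set.Icc t₀ (t₀ + Δt), ∀ l, |udot t l| ≤ W l)
    (x : ℝ → Fin n → ℝ)
    (hx : ∀ t ∈ Set.Icc t₀ (t₀ + Δt),
      HasDerivAt x (fun k => f (x t) k + ∑ l, G (x t) k l * u t l) t)
    (hxS : ∀ t ∈ Set.Icc t₀ (t₀ + Δt), x t ∈ Sset) :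
    ∀ k, |x (t₀ + Δt) k - x t₀ k - Δt * (f (x t₀) k + ∑ l, G (x t₀) k l * u t₀ l)| ≤
      (Δt ^ 2 / 2) *
        ((Lf k + ∑ l, LG k l * V l) * (∑ p, (F p + ∑ l, Γ p l * V l))
          + ∑ l, Γ k l * W l) := by
  intro k
  set t₁ := t₀ + Δt with ht₁def
  have ht₀mem : t₀ ∈ Set.Icc t₀ t₁ := ⟨le_refl _, by simp [ht₁def]; linarith⟩
  have ht₁mem : t₁ ∈ Set.Icc t₀ t₁ := ⟨by simp [ht₁def]; linarith, le_refl _⟩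
  set A : ℝ := ∑ p, (F p + ∑ l, Γ p l * V l) with hAdef
  set M : ℝ := (Lf k + ∑ l, LG k l * V l) * A + ∑ l, Γ k l * W l with hMdef
  set xd : ℝ → Fin n → ℝ := fun t p => f (x t) p + ∑ l, G (x t) p l * u t l with hxddef
  set ψ : ℝ → ℝ := fun t => f (x t) k + ∑ l, G (x t) k l * u t l with hψdef
  set D : ℝ → ℝ := fun t => fderiv ℝ (fun y => f y k) (x t) (xd t)
      + ∑ l, (fderiv ℝ (fun y => G y k l) (x t) (xd t) * u t l + G (x t) k l * udot t l)
    with hDdef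
  -- bound on the entries of the velocity
  have hxdb : ∀ t ∈ Set.Icc t₀ t₁, ∀ p, |xd t p| ≤ F p + ∑ l, Γ p l * V l := by
    intro t ht p
    have hs := hxS t ht
    have h2 : |∑ l, G (x t) p l * u t l| ≤ ∑ l, Γ p l * V l := by
      refine (Finset.abs_sum_le_sum_abs _ _).trans (Finset.sum_le_sum fun l _ => ?_)
      rw [abs_mul]
      exact mul_le_mul (hΓb _ hs p l) (hV t ht l) (abs_nonneg _)
        ((abs_nonneg _).trans (hΓb _ hs p l))
    exact (abs_add_le _ _).trans (add_le_add (hFb _ hs p) h2)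
  -- the derivative of ψ along the trajectory
  have hψd : ∀ t ∈ Set.Icc t₀ t₁, HasDerivAt ψ (D t) t := by
    intro t ht
    have hxt : HasDerivAt x (xd t) t := hx t ht
    have hmem : x t ∈ Uo := hSU (hxS t ht)
    have hfk : DifferentiableAt ℝ (fun y => f y k) (x t) :=
      (differentiableAt_pi.mp (hfd (x t) hmem)) k
    have hfc : HasDerivAt (fun s => f (x s) k)
        (fderiv ℝ (fun y => f y k) (x t) (xd t)) t :=
      hfk.hasFDerivAt.comp_hasDerivAt t hxt
    have hGc : ∀ l, HasDerivAt (fun s => G (x s) k l)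
        (fderiv ℝ (fun y => G y k l) (x t) (xd t)) t := by
      intro l
      have hGkl : DifferentiableAt ℝ (fun y => G y k l) (x t) :=
        (differentiableAt_pi.mp ((differentiableAt_pi.mp (hGd (x t) hmem)) k)) l
      exact hGkl.hasFDerivAt.comp_hasDerivAt t hxt
    have huc : ∀ l, HasDerivAt (fun s => u s l) (udot t l) t := fun l =>
      hasDerivAt_pi.mp (hud t ht) l
    exact hfc.add (HasDerivAt.fun_sum fun l _ => (hGc l).mul (huc l))
  -- bound on |D t|
  have hDb : ∀ t ∈ Set.Icc t₀ t₁, |D t| ≤ M := by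
    intro t ht
    have hs := hxS t ht
    have hb := hxdb t ht
    have h1 : |fderiv ℝ (fun y => f y k) (x t) (xd t)| ≤ Lf k * A :=
      lin_bound_aux _ _ _ _ (fun p => hpf _ hs k p) hb
    have h2 : ∀ l, |fderiv ℝ (fun y => G y k l) (x t) (xd t)| ≤ LG k l * A := fun l =>
      lin_bound_aux _ _ _ _ (fun p => hpG _ hs k l p) hb
    have h3 : |∑ l, (fderiv ℝ (fun y => G y k l) (x t) (xd t) * u t l
        + G (x t) k l * udot t l)| ≤ ∑ l, (LG k l * A * V l + Γ k l * W l) := by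
      refine (Finset.abs_sum_le_sum_abs _ _).trans (Finset.sum_le_sum fun l _ => ?_)
      refine (abs_add_le _ _).trans (add_le_add ?_ ?_)
      · rw [abs_mul]
        exact mul_le_mul (h2 l) (hV t ht l) (abs_nonneg _) ((abs_nonneg _).trans (h2 l))
      · rw [abs_mul]
        exact mul_le_mul (hΓb _ hs k l) (hW t ht l) (abs_nonneg _)
          ((abs_nonneg _).trans (hΓb _ hs k l))
    have heq : Lf k * A + ∑ l, (LG k l * A * V l + Γ k l * W l) = M := by
      rw [hMdef, Finset.sum_add_distrib, add_mul, Finset.sum_mul, ← add_assoc]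
      congr 1
      congr 1
      exact Finset.sum_congr rfl fun l _ => by ring
    calc |D t| ≤ |fderiv ℝ (fun y => f y k) (x t) (xd t)|
        + |∑ l, (fderiv ℝ (fun y => G y k l) (x t) (xd t) * u t l
            + G (x t) k l * udot t l)| := abs_add_le _ _
      _ ≤ Lf k * A + ∑ l, (LG k l * A * V l + Γ k l * W l) := add_le_add h1 h3
      _ = M := heq
  -- Lipschitz-type bound on ψ
  have hψlip : ∀ t ∈ Set.Icc t₀ t₁, |ψ t - ψ t₀| ≤ M * (t - t₀) := by
    intro t ht
    have := (convex_Icc t₀ t₁).norm_image_sub_le_of_norm_hasDerivWithin_le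
      (fun s hs => (hψd s hs).hasDerivWithinAt)
      (fun s hs => by simpa [Real.norm_eq_abs] using hDb s hs) ht₀mem ht
    simpa [Real.norm_eq_abs, abs_of_nonneg (sub_nonneg.mpr ht.1)] using this
  -- the remainder function
  set g : ℝ → ℝ := fun t => x t k - x t₀ k - (t - t₀) * ψ t₀ with hgdef
  have hgd : ∀ t ∈ Set.Icc t₀ t₁, HasDerivAt g (ψ t - ψ t₀) t := by
    intro t ht
    have hxk : HasDerivAt (fun s => x s k) (ψ t) t := hasDerivAt_pi.mp (hx t ht) k
    have hlin : HasDerivAt (fun s => (s - t₀) * ψ t₀) (ψ t₀) t := by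
      simpa using ((hasDerivAt_id t).sub_const t₀).mul_const (ψ t₀)
    simpa using (hxk.sub_const (x t₀ k)).fun_sub hlin
  have hgcont : ContinuousOn g (Set.Icc t₀ t₁) := fun t ht =>
    (hgd t ht).continuousAt.continuousWithinAt
  -- the quadratic boundary function
  have hB : ∀ s : ℝ, HasDerivAt (fun t => M * (t - t₀) ^ 2 / 2) (M * (s - t₀)) s := by
    intro s
    have h1 : HasDerivAt (fun t : ℝ => (t - t₀) ^ 2) (2 * (s - t₀)) s := by
      simpa using ((hasDerivAt_id s).sub_const t₀).fun_pow 2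
    have := (h1.const_mul M).div_const 2
    rw [show M * (s - t₀) = M * (2 * (s - t₀)) / 2 by ring]
    exact this
  have key : ∀ t ∈ Set.Icc t₀ t₁, ‖g t‖ ≤ M * (t - t₀) ^ 2 / 2 :=
    image_norm_le_of_norm_deriv_right_le_deriv_boundary hgcont
      (fun s hs => (hgd s (Set.Ico_subset_Icc_self hs)).hasDerivWithinAt)
      (by simp [hgdef]) hB
      (fun s hs => by
        simpa [Real.norm_eq_abs] using hψlip s (Set.Ico_subset_Icc_self hs))
  have h1 : |g t₁| ≤ M * Δt ^ 2 / 2 := by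
    have := key t₁ ht₁mem
    rw [Real.norm_eq_abs] at this
    have ht : t₁ - t₀ = Δt := by rw [ht₁def]; ring
    rwa [ht] at this
  have h2 : g t₁ = x t₁ k - x t₀ k - Δt * (f (x t₀) k + ∑ l, G (x t₀) k l * u t₀ l) := by
    have ht : t₁ - t₀ = Δt := by rw [ht₁def]; ring
    simp only [hgdef, ht, hψdef]
  calc |x t₁ k - x t₀ k - Δt * (f (x t₀) k + ∑ l, G (x t₀) k l * u t₀ l)|
      = |g t₁| := by rw [h2]
    _ ≤ M * Δt ^ 2 / 2 := h1
    _ = Δt ^ 2 / 2 * M := by ring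
end

section
/- Let n, m ≥ 1, S ⊆ ℝⁿ, and let f : ℝⁿ → ℝⁿ and G : ℝⁿ → ℝ^{n×m} be differentiable on an open set containing S, with |∂f_k/∂x_p(s)| ≤ L_{f,k}, |∂G_{k,l}/∂x_p(s)| ≤ L_{G,k,l}, |f_k(s)| ≤ F_k and |G_{k,l}(s)| ≤ Γ_{k,l} for all s ∈ S and all k, p, l. Let t₀ ∈ ℝ, Δt > 0, let u ∈ ℝᵐ be a constant control value with |u_l| ≤ V_l for all l, and let x : ℝ → ℝⁿ be differentiable on [t₀, t₀ + Δt] with ẋ(t) = f(x(t)) + G(x(t))·u and x(t) ∈ S for all t ∈ [t₀, t₀ + Δt]. Then there exist b ∈ ℝⁿ and matrices A⁺, A⁻ ∈ ℝ^{n×m} such that x(t₀ + Δt) = b + A⁺·u and x(t₀ + Δt) = b + A⁻·u, and for all k, l: |b_k − x_k(t₀) − Δt·f_k(x(t₀))| ≤ (Δt²/2)·L_{f,k}·Σ_{p=1}^n F_p; |A⁺_{k,l} − Δt·G_{k,l}(x(t₀))| ≤ (Δt²/2)·[ ( L_{f,k} + Σ_{l'=1}^m L_{G,k,l'}·V_{l'}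 )·Σ_{p=1}^n Γ_{p,l} + L_{G,k,l}·Σ_{p=1}^n F_p ]; and |A⁻_{k,l} − Δt·G_{k,l}(x(t₀))| ≤ (Δt²/2)·[ L_{f,k}·Σ_{p=1}^n Γ_{p,l} + L_{G,k,l}·Σ_{p=1}^n ( F_p + Σ_{l'=1}^m Γ_{p,l'}·V_{l'} ) ]. -/
open Finset MeasureTheory

lemma key_int {t₀ T : ℝ} (h : t₀ ≤ T) (φ : ℝ → ℝ) (C : ℝ)
    (meas : AEMeasurable φ (volume.restrict (Set.Ioc t₀ T)))
    (bound : ∀ s ∈ Set.Icc t₀ T, |φ s| ≤ C) :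
    IntervalIntegrable (fun s => (T - s) * φ s) volume t₀ T ∧
    |∫ s in t₀..T, (T - s) * φ s| ≤ (T - t₀) ^ 2 / 2 * C := by
  have hC : 0 ≤ C := le_trans (abs_nonneg _) (bound t₀ ⟨le_refl _, h⟩)
  have hIoc : Set.uIoc t₀ T = Set.Ioc t₀ T := Set.uIoc_of_le h
  have hmeas : AEStronglyMeasurable (fun s => (T - s) * φ s)
      (volume.restrict (Set.uIoc t₀ T)) := by
    rw [hIoc]
    exact (AEMeasurable.mul (by fun_prop) meas).aestronglyMeasurable
  have hbd : ∀ᵐ s ∂(volume.restrict (Set.uIoc t₀ T)),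
      ‖(T - s) * φ s‖ ≤ ‖(T - t₀) * C‖ := by
    rw [hIoc, ae_restrict_iff' measurableSet_Ioc]
    filter_upwards with s hs
    have h1 : |T - s| ≤ T - t₀ := by
      rw [abs_of_nonneg (by linarith [hs.2])]; linarith [hs.1.le]
    have h2 := bound s ⟨hs.1.le, hs.2⟩
    rw [Real.norm_eq_abs, Real.norm_eq_abs, abs_mul,
      abs_of_nonneg (mul_nonneg (by linarith) hC)]
    exact mul_le_mul h1 h2 (abs_nonneg _) (by linarith)
  have hint : IntervalIntegrable (fun s => (T - s) * φ s) volume t₀ T :=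
    (intervalIntegrable_const (c := (T - t₀) * C)).mono_fun hmeas ((by
      filter_upwards [hbd] with s hs
      simpa using hs))
  refine ⟨hint, ?_⟩
  have hbd2 : ∀ᵐ s ∂(volume.restrict (Set.uIoc t₀ T)),
      ‖(T - s) * φ s‖ ≤ (T - s) * C := by
    rw [hIoc, ae_restrict_iff' measurableSet_Ioc]
    filter_upwards with s hs
    have h2 := bound s ⟨hs.1.le, hs.2⟩
    rw [Real.norm_eq_abs, abs_mul, abs_of_nonneg (by linarith [hs.2] : (0:ℝ) ≤ T - s)]
    exact mul_le_mul_of_nonneg_left h2 (by linarith [hs.2])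
  have hgint : IntervalIntegrable (fun s => (T - s) * C) volume t₀ T := by
    apply ContinuousOn.intervalIntegrable; fun_prop
  have := intervalIntegral.norm_integral_le_abs_of_norm_le hbd2 hgint
  rw [Real.norm_eq_abs] at this
  refine this.trans ?_
  have hval : (∫ s in t₀..T, (T - s) * C) = (T - t₀) ^ 2 / 2 * C := by
    rw [intervalIntegral.integral_mul_const]
    rw [intervalIntegral.integral_sub intervalIntegrable_const
      intervalIntegral.intervalIntegrable_id]
    rw [integral_id, intervalIntegral.integral_const]
    simp only [smul_eq_mul, mul_one]
    ring
  rw [hval, abs_of_nonneg (by positivity)]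

lemma plus_identity {n m : ℕ} (A B c e : Fin n → ℝ) (u : Fin m → ℝ)
    (Gm : Fin n → Fin m → ℝ) (DG : Fin m → Fin n → ℝ)
    (he : ∀ p, e p = ∑ l, Gm p l * u l) (hB : ∀ p, B p = ∑ l, u l * DG l p) :
    (∑ p, A p * c p) + ∑ l, u l * ((∑ p, (A p + B p) * Gm p l) + ∑ p, DG l p * c p)
      = ∑ p, (A p + B p) * (c p + e p) := by
  have h1 : ∑ l, u l * ((∑ p, (A p + B p) * Gm p l) + ∑ p, DG l p * c p)
      = ∑ l, ∑ p, (u l * ((A p + B p) * Gm p l) + u l * (DG l p * c p)) := by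
    refine Finset.sum_congr rfl fun l _ => ?_
    rw [mul_add, Finset.mul_sum, Finset.mul_sum, ← Finset.sum_add_distrib]
  rw [h1, Finset.sum_comm, ← Finset.sum_add_distrib]
  refine Finset.sum_congr rfl fun p _ => ?_
  rw [he, hB]
  rw [show (∑ l, (u l * ((A p + ∑ l, u l * DG l p) * Gm p l) + u l * (DG l p * c p)))
    = ((A p + ∑ l, u l * DG l p) * ∑ l, Gm p l * u l) + (∑ l, u l * DG l p) * c p by
      rw [Finset.mul_sum, Finset.sum_mul, ← Finset.sum_add_distrib]
      exact Finset.sum_congr rfl fun l _ => by ring]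
  ring

lemma minus_identity {n m : ℕ} (A B c e d : Fin n → ℝ) (u : Fin m → ℝ)
    (Gm : Fin n → Fin m → ℝ) (DG : Fin m → Fin n → ℝ)
    (he : ∀ p, e p = ∑ l, Gm p l * u l) (hB : ∀ p, B p = ∑ l, u l * DG l p)
    (hd : ∀ p, d p = c p + e p) :
    (∑ p, A p * c p) + ∑ l, u l * ((∑ p, A p * Gm p l) + ∑ p, DG l p * d p)
      = ∑ p, (A p + B p) * (c p + e p) := by
  have h1 : ∑ l, u l * ((∑ p, A p * Gm p l) + ∑ p, DG l p * d p)
      = ∑ l, ∑ p, (u l * (A p * Gm p l) + u l * (DG l p * d p)) := by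
    refine Finset.sum_congr rfl fun l _ => ?_
    rw [mul_add, Finset.mul_sum, Finset.mul_sum, ← Finset.sum_add_distrib]
  rw [h1, Finset.sum_comm, ← Finset.sum_add_distrib]
  refine Finset.sum_congr rfl fun p _ => ?_
  rw [he, hB, hd, he]
  rw [show (∑ l, (u l * (A p * Gm p l) + u l * (DG l p * (c p + ∑ l, Gm p l * u l))))
    = (A p * ∑ l, Gm p l * u l)
      + (∑ l, u l * DG l p) * (c p + ∑ l, Gm p l * u l) by
      rw [Finset.mul_sum, Finset.sum_mul, ← Finset.sum_add_distrib]
      exact Finset.sum_congr rfl fun l _ => by ring]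
  ring
theorem control_affine_linearization (n m : ℕ) (hn : 1 ≤ n) (hm : 1 ≤ m)
    (Sset Uo : Set (Fin n → ℝ)) (hUo : IsOpen Uo) (hSU : Sset ⊆ Uo)
    (f : (Fin n → ℝ) → Fin n → ℝ) (G : (Fin n → ℝ) → Fin n → Fin m → ℝ)
    (hfd : ∀ y ∈ Uo, DifferentiableAt ℝ f y)
    (hGd : ∀ y ∈ Uo, DifferentiableAt ℝ G y)
    (Lf F : Fin n → ℝ) (LG Γ : Fin n → Fin m → ℝ)
    (hpf : ∀ s ∈ Sset, ∀ (k p : Fin n),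
      |fderiv ℝ (fun y => f y k) s (Pi.single p (1 : ℝ))| ≤ Lf k)
    (hpG : ∀ s ∈ Sset, ∀ (k : Fin n) (l : Fin m) (p : Fin n),
      |fderiv ℝ (fun y => G y k l) s (Pi.single p (1 : ℝ))| ≤ LG k l)
    (hFb : ∀ s ∈ Sset, ∀ k, |f s k| ≤ F k)
    (hΓb : ∀ s ∈ Sset, ∀ k l, |G s k l| ≤ Γ k l)
    (t₀ Δt : ℝ) (hΔt : 0 < Δt)
    (u : Fin m → ℝ) (V : Fin m → ℝ) (hV : ∀ l, |u l| ≤ V l)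
    (x : ℝ → Fin n → ℝ)
    (hx : ∀ t ∈ Set.Icc t₀ (t₀ + Δt),
      HasDerivAt x (fun k => f (x t) k + ∑ l, G (x t) k l * u l) t)
    (hxS : ∀ t ∈ Set.Icc t₀ (t₀ + Δt), x t ∈ Sset) :
    ∃ (b : Fin n → ℝ) (Aplus Aminus : Fin n → Fin m → ℝ),
      (∀ k, x (t₀ + Δt) k = b k + ∑ l, Aplus k l * u l) ∧
      (∀ k, x (t₀ + Δt) k = b k + ∑ l, Aminus k l * u l) ∧
      (∀ k, |b k - x t₀ k - Δt * f (x t₀) k| ≤ (Δt ^ 2 / 2) * (Lf k * ∑ p, F p)) ∧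
      (∀ k l, |Aplus k l - Δt * G (x t₀) k l| ≤
        (Δt ^ 2 / 2) * ((Lf k + ∑ l', LG k l' * V l') * (∑ p, Γ p l)
          + LG k l * ∑ p, F p)) ∧
      (∀ k l, |Aminus k l - Δt * G (x t₀) k l| ≤
        (Δt ^ 2 / 2) * (Lf k * (∑ p, Γ p l)
          + LG k l * ∑ p, (F p + ∑ l', Γ p l' * V l'))) := by
  set T := t₀ + Δt with hT
  have htT : t₀ ≤ T := by rw [hT]; linarith
  have hTt : T - t₀ = Δt := by rw [hT]; ring
  -- basic nonnegativity
  have hx0S : x t₀ ∈ Sset := hxS t₀ ⟨le_refl _, htT⟩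
  have hLf0 : ∀ k, 0 ≤ Lf k := fun k => (abs_nonneg _).trans (hpf _ hx0S k k)
  have hLG0 : ∀ k l, 0 ≤ LG k l := fun k l => (abs_nonneg _).trans (hpG _ hx0S k l k)
  have hF0 : ∀ p, 0 ≤ F p := fun p => (abs_nonneg _).trans (hFb _ hx0S p)
  have hΓ0 : ∀ p l, 0 ≤ Γ p l := fun p l => (abs_nonneg _).trans (hΓb _ hx0S p l)
  have hV0 : ∀ l, 0 ≤ V l := fun l => (abs_nonneg _).trans (hV l)
  -- abbreviations
  set d : ℝ → Fin n → ℝ := fun s p => f (x s) p + ∑ l, G (x s) p l * u l with hd_def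
  set Df : Fin n → ℝ → Fin n → ℝ :=
    fun k s p => fderiv ℝ (fun y => f y k) (x s) (Pi.single p 1) with hDf_def
  set DG : Fin n → Fin m → ℝ → Fin n → ℝ :=
    fun k l s p => fderiv ℝ (fun y => G y k l) (x s) (Pi.single p 1) with hDG_def
  set hb : Fin n → ℝ → ℝ := fun k s => ∑ p, Df k s p * f (x s) p with hhb_def
  set hp : Fin n → Fin m → ℝ → ℝ := fun k l s =>
    (∑ p, (Df k s p + ∑ l', u l' * DG k l' s p) * G (x s) p l)
      + ∑ p, DG k l s p * f (x s) p with hhp_def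
  set hq : Fin n → Fin m → ℝ → ℝ := fun k l s =>
    (∑ p, Df k s p * G (x s) p l) + ∑ p, DG k l s p * d s p with hhq_def
  set gf : Fin n → ℝ → ℝ := fun k s =>
    ∑ p, (Df k s p + ∑ l', u l' * DG k l' s p) * d s p with hgf_def
  -- membership and pointwise bounds
  have hmemS : ∀ s ∈ Set.Icc t₀ T, x s ∈ Sset := hxS
  have hmemU : ∀ s ∈ Set.Icc t₀ T, x s ∈ Uo := fun s hs => hSU (hxS s hs)
  have hDfb : ∀ s ∈ Set.Icc t₀ T, ∀ k p, |Df k s p| ≤ Lf k :=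
    fun s hs k p => hpf _ (hmemS s hs) k p
  have hDGb : ∀ s ∈ Set.Icc t₀ T, ∀ k l p, |DG k l s p| ≤ LG k l :=
    fun s hs k l p => hpG _ (hmemS s hs) k l p
  have hfb : ∀ s ∈ Set.Icc t₀ T, ∀ p, |f (x s) p| ≤ F p :=
    fun s hs p => hFb _ (hmemS s hs) p
  have hGb : ∀ s ∈ Set.Icc t₀ T, ∀ p l, |G (x s) p l| ≤ Γ p l :=
    fun s hs p l => hΓb _ (hmemS s hs) p l
  have hABb : ∀ s ∈ Set.Icc t₀ T, ∀ k,
      ∀ p, |Df k s p + ∑ l', u l' * DG k l' s p| ≤ Lf k + ∑ l', LG k l' * V l' := by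
    intro s hs k p
    refine (abs_add_le _ _).trans (add_le_add (hDfb s hs k p) ?_)
    refine (Finset.abs_sum_le_sum_abs _ _).trans (Finset.sum_le_sum fun l' _ => ?_)
    rw [abs_mul, mul_comm (LG k l') (V l')]
    exact mul_le_mul (hV l') (hDGb s hs k l' p) (abs_nonneg _) (hV0 l')
  have hdb : ∀ s ∈ Set.Icc t₀ T, ∀ p, |d s p| ≤ F p + ∑ l', Γ p l' * V l' := by
    intro s hs p
    refine (abs_add_le _ _).trans (add_le_add (hfb s hs p) ?_)
    refine (Finset.abs_sum_le_sum_abs _ _).trans (Finset.sum_le_sum fun l' _ => ?_)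
    rw [abs_mul]
    exact mul_le_mul (hGb s hs p l') (hV l') (abs_nonneg _) (hΓ0 p l')
  -- bounds on the integrands
  have Bb : ∀ k, ∀ s ∈ Set.Icc t₀ T, |hb k s| ≤ Lf k * ∑ p, F p := by
    intro k s hs
    rw [Finset.mul_sum]
    refine (Finset.abs_sum_le_sum_abs _ _).trans (Finset.sum_le_sum fun p _ => ?_)
    rw [abs_mul]
    exact mul_le_mul (hDfb s hs k p) (hfb s hs p) (abs_nonneg _) (hLf0 k)
  have Bp : ∀ k l, ∀ s ∈ Set.Icc t₀ T, |hp k l s| ≤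
      (Lf k + ∑ l', LG k l' * V l') * (∑ p, Γ p l) + LG k l * ∑ p, F p := by
    intro k l s hs
    refine (abs_add_le _ _).trans (add_le_add ?_ ?_)
    · rw [Finset.mul_sum]
      refine (Finset.abs_sum_le_sum_abs _ _).trans (Finset.sum_le_sum fun p _ => ?_)
      rw [abs_mul]
      refine mul_le_mul (hABb s hs k p) (hGb s hs p l) (abs_nonneg _) ?_
      have := hABb s hs k p
      exact (abs_nonneg _).trans this
    · rw [Finset.mul_sum]
      refine (Finset.abs_sum_le_sum_abs _ _).trans (Finset.sum_le_sum fun p _ => ?_)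
      rw [abs_mul]
      exact mul_le_mul (hDGb s hs k l p) (hfb s hs p) (abs_nonneg _) (hLG0 k l)
  have Bq : ∀ k l, ∀ s ∈ Set.Icc t₀ T, |hq k l s| ≤
      Lf k * (∑ p, Γ p l) + LG k l * ∑ p, (F p + ∑ l', Γ p l' * V l') := by
    intro k l s hs
    refine (abs_add_le _ _).trans (add_le_add ?_ ?_)
    · rw [Finset.mul_sum]
      refine (Finset.abs_sum_le_sum_abs _ _).trans (Finset.sum_le_sum fun p _ => ?_)
      rw [abs_mul]
      exact mul_le_mul (hDfb s hs k p) (hGb s hs p l) (abs_nonneg _) (hLf0 k)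
    · rw [Finset.mul_sum]
      refine (Finset.abs_sum_le_sum_abs _ _).trans (Finset.sum_le_sum fun p _ => ?_)
      rw [abs_mul]
      exact mul_le_mul (hDGb s hs k l p) (hdb s hs p) (abs_nonneg _) (hLG0 k l)
  -- measurability
  have hxc : ContinuousOn x (Set.Icc t₀ T) :=
    fun t ht => (hx t ht).continuousAt.continuousWithinAt
  have hxm : AEMeasurable x (volume.restrict (Set.Ioc t₀ T)) :=
    (hxc.aemeasurable measurableSet_Icc).mono_measure
      (Measure.restrict_mono Set.Ioc_subset_Icc_self le_rfl)
  have hfxc : ContinuousOn (fun s => f (x s)) (Set.Icc t₀ T) :=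
    ContinuousOn.comp (fun y hy => (hfd y hy).continuousAt.continuousWithinAt) hxc hmemU
  have hGxc : ContinuousOn (fun s => G (x s)) (Set.Icc t₀ T) :=
    ContinuousOn.comp (fun y hy => (hGd y hy).continuousAt.continuousWithinAt) hxc hmemU
  have hfm : ∀ p, AEMeasurable (fun s => f (x s) p) (volume.restrict (Set.Ioc t₀ T)) := by
    intro p
    have : ContinuousOn (fun s => f (x s) p) (Set.Icc t₀ T) :=
      (continuous_apply p).comp_continuousOn hfxc
    exact (this.aemeasurable measurableSet_Icc).mono_measure
      (Measure.restrict_mono Set.Ioc_subset_Icc_self le_rfl)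
  have hGm : ∀ p l, AEMeasurable (fun s => G (x s) p l)
      (volume.restrict (Set.Ioc t₀ T)) := by
    intro p l
    have : ContinuousOn (fun s => G (x s) p l) (Set.Icc t₀ T) :=
      (continuous_apply l).comp_continuousOn ((continuous_apply p).comp_continuousOn hGxc)
    exact (this.aemeasurable measurableSet_Icc).mono_measure
      (Measure.restrict_mono Set.Ioc_subset_Icc_self le_rfl)
  have hDfm : ∀ k p, AEMeasurable (fun s => Df k s p)
      (volume.restrict (Set.Ioc t₀ T)) := fun k p =>
    (measurable_fderiv_apply_const ℝ (fun y => f y k) (Pi.single p 1)).comp_aemeasurable hxm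
  have hDGm : ∀ k l p, AEMeasurable (fun s => DG k l s p)
      (volume.restrict (Set.Ioc t₀ T)) := fun k l p =>
    (measurable_fderiv_apply_const ℝ (fun y => G y k l) (Pi.single p 1)).comp_aemeasurable hxm
  have hdm : ∀ p, AEMeasurable (fun s => d s p) (volume.restrict (Set.Ioc t₀ T)) := by
    intro p
    exact (hfm p).add (Finset.aemeasurable_fun_sum _ fun l _ => (hGm p l).mul_const (u l))
  have hbm : ∀ k, AEMeasurable (hb k) (volume.restrict (Set.Ioc t₀ T)) := by
    intro k
    exact Finset.aemeasurable_fun_sum _ fun p _ => (hDfm k p).mul (hfm p)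
  have hpm : ∀ k l, AEMeasurable (hp k l) (volume.restrict (Set.Ioc t₀ T)) := by
    intro k l
    refine AEMeasurable.add ?_ ?_
    · exact Finset.aemeasurable_fun_sum _ fun p _ =>
        (((hDfm k p).add (Finset.aemeasurable_fun_sum _ fun l' _ =>
          (hDGm k l' p).const_mul (u l'))).mul (hGm p l))
    · exact Finset.aemeasurable_fun_sum _ fun p _ => (hDGm k l p).mul (hfm p)
  have hqm : ∀ k l, AEMeasurable (hq k l) (volume.restrict (Set.Ioc t₀ T)) := by
    intro k l
    refine AEMeasurable.add ?_ ?_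
    · exact Finset.aemeasurable_fun_sum _ fun p _ => (hDfm k p).mul (hGm p l)
    · exact Finset.aemeasurable_fun_sum _ fun p _ => (hDGm k l p).mul (hdm p)
  -- key integral facts
  have Kb := fun k => key_int htT (hb k) _ (hbm k) (Bb k)
  have Kp := fun k l => key_int htT (hp k l) _ (hpm k l) (Bp k l)
  have Kq := fun k l => key_int htT (hq k l) _ (hqm k l) (Bq k l)
  -- algebraic identities
  have hid_p : ∀ k s, hb k s + ∑ l, u l * hp k l s = gf k s := by
    intro k s
    exact plus_identity (Df k s) (fun p => ∑ l', u l' * DG k l' s p) (f (x s))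
      (fun p => ∑ l, G (x s) p l * u l) u (G (x s)) (fun l p => DG k l s p)
      (fun p => rfl) (fun p => rfl)
  have hid_q : ∀ k s, hb k s + ∑ l, u l * hq k l s = gf k s := by
    intro k s
    exact minus_identity (Df k s) (fun p => ∑ l', u l' * DG k l' s p) (f (x s))
      (fun p => ∑ l, G (x s) p l * u l) (d s) u (G (x s)) (fun l p => DG k l s p)
      (fun p => rfl) (fun p => rfl) (fun p => rfl)
  -- derivative of the vector field along the trajectory
  have hderiv : ∀ s ∈ Set.Icc t₀ T, ∀ k, HasDerivAt (fun t => d t k) (gf k s) s := by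
    intro s hs k
    have hyU : x s ∈ Uo := hmemU s hs
    have h1 : DifferentiableAt ℝ (fun y => f y k) (x s) :=
      (differentiableAt_pi.mp (hfd _ hyU)) k
    have h2 : ∀ l, DifferentiableAt ℝ (fun y => G y k l) (x s) := fun l =>
      (differentiableAt_pi.mp ((differentiableAt_pi.mp (hGd _ hyU)) k)) l
    set L : (Fin n → ℝ) →L[ℝ] ℝ := fderiv ℝ (fun y => f y k) (x s)
      + ∑ l, u l • fderiv ℝ (fun y => G y k l) (x s) with hL
    have hFk : HasFDerivAt (fun y => f y k + ∑ l, G y k l * u l) L (x s) := by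
      refine HasFDerivAt.add h1.hasFDerivAt (HasFDerivAt.fun_sum fun l _ => ?_)
      exact (h2 l).hasFDerivAt.mul_const (u l)
    have hcomp : HasDerivAt (fun t => d t k) (L (d s)) s := by
      have := hFk.comp_hasDerivAt s (hx s hs)
      exact this
    have hLs : ∀ p, L (Pi.single p 1) = Df k s p + ∑ l, u l * DG k l s p := by
      intro p
      simp [hL, ContinuousLinearMap.sum_apply, smul_eq_mul]
      rfl
    have hvec : d s = ∑ p, d s p • (Pi.single p 1 : Fin n → ℝ) := by
      funext q
      rw [Finset.sum_apply]
      simp [Pi.single_apply]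
    have hLd : L (d s) = gf k s := by
      conv_lhs => rw [hvec]
      rw [map_sum]
      refine Finset.sum_congr rfl fun p _ => ?_
      rw [_root_.map_smul, smul_eq_mul, hLs p]
      ring
    rw [hLd] at hcomp
    exact hcomp
  have hxk : ∀ s ∈ Set.Icc t₀ T, ∀ k, HasDerivAt (fun t => x t k) (d s k) s := by
    intro s hs k
    have := (ContinuousLinearMap.proj (R := ℝ) (φ := fun _ : Fin n => ℝ) k
      ).hasFDerivAt.comp_hasDerivAt s (hx s hs)
    exact this
  have hdt0 : ∀ k, d t₀ k = f (x t₀) k + ∑ l, G (x t₀) k l * u l := fun k => rfl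
  clear hd_def hDf_def hDG_def hhb_def hhp_def hhq_def hgf_def
  clear_value gf hq hp hb DG Df d
  -- integrability of gf
  have hIsum : ∀ (Φ : Fin m → ℝ → ℝ), (∀ l, IntervalIntegrable (Φ l) volume t₀ T) →
      IntervalIntegrable (fun s => ∑ l, Φ l s) volume t₀ T := by
    intro Φ h
    have hfs : (fun s => ∑ l, Φ l s) = ∑ l, Φ l := by
      funext s; simp [Finset.sum_apply]
    rw [hfs]
    exact IntervalIntegrable.sum _ fun l _ => h l
  have hint_gf : ∀ k, IntervalIntegrable (fun s => (T - s) * gf k s) volume t₀ T := by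
    intro k
    have heq : (fun s => (T - s) * gf k s)
        = fun s => (T - s) * hb k s + ∑ l, u l * ((T - s) * hp k l s) := by
      funext s
      rw [← hid_p k s, mul_add, Finset.mul_sum]
      congr 1
      exact Finset.sum_congr rfl fun l _ => by ring
    rw [heq]
    exact (Kb k).1.add (hIsum _ fun l => ((Kp k l).1.const_mul (u l)))
  -- FTC
  have hftc : ∀ k, ∫ s in t₀..T, (T - s) * gf k s
      = x T k - x t₀ k - Δt * d t₀ k := by
    intro k
    have hd2 : ∀ s ∈ Set.uIcc t₀ T,
        HasDerivAt (fun t => x t k + (T - t) * d t k) ((T - s) * gf k s) s := by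
      rw [Set.uIcc_of_le htT]
      intro s hs
      have hw : HasDerivAt (fun t : ℝ => (T - t)) (-1) s := by
        simpa using (hasDerivAt_const s T).fun_sub (hasDerivAt_id s)
      have := (hxk s hs k).fun_add (hw.fun_mul (hderiv s hs k))
      exact this.congr_deriv (by ring)
    have := intervalIntegral.integral_eq_sub_of_hasDerivAt hd2 (hint_gf k)
    rw [this]
    simp only [sub_self, zero_mul, add_zero]
    rw [hTt]
    ring
  -- linearity decompositions
  have hsplit_p : ∀ k, ∫ s in t₀..T, (T - s) * gf k s
      = (∫ s in t₀..T, (T - s) * hb k s)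
        + ∑ l, u l * ∫ s in t₀..T, (T - s) * hp k l s := by
    intro k
    have heq : (fun s => (T - s) * gf k s)
        = fun s => (T - s) * hb k s + ∑ l, u l * ((T - s) * hp k l s) := by
      funext s
      rw [← hid_p k s, mul_add, Finset.mul_sum]
      congr 1
      exact Finset.sum_congr rfl fun l _ => by ring
    rw [heq, intervalIntegral.integral_add (Kb k).1
      (hIsum _ fun l => ((Kp k l).1.const_mul (u l))),
      intervalIntegral.integral_finset_sum
        (fun l _ => ((Kp k l).1.const_mul (u l)))]
    congr 1
    exact Finset.sum_congr rfl fun l _ => intervalIntegral.integral_const_mul _ _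
  have hsplit_q : ∀ k, ∫ s in t₀..T, (T - s) * gf k s
      = (∫ s in t₀..T, (T - s) * hb k s)
        + ∑ l, u l * ∫ s in t₀..T, (T - s) * hq k l s := by
    intro k
    have heq : (fun s => (T - s) * gf k s)
        = fun s => (T - s) * hb k s + ∑ l, u l * ((T - s) * hq k l s) := by
      funext s
      rw [← hid_q k s, mul_add, Finset.mul_sum]
      congr 1
      exact Finset.sum_congr rfl fun l _ => by ring
    rw [heq, intervalIntegral.integral_add (Kb k).1
      (hIsum _ fun l => ((Kq k l).1.const_mul (u l))),
      intervalIntegral.integral_finset_sum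
        (fun l _ => ((Kq k l).1.const_mul (u l)))]
    congr 1
    exact Finset.sum_congr rfl fun l _ => intervalIntegral.integral_const_mul _ _
  -- conclusion
  refine ⟨fun k => x t₀ k + Δt * f (x t₀) k + ∫ s in t₀..T, (T - s) * hb k s,
    fun k l => Δt * G (x t₀) k l + ∫ s in t₀..T, (T - s) * hp k l s,
    fun k l => Δt * G (x t₀) k l + ∫ s in t₀..T, (T - s) * hq k l s,
    ?_, ?_, ?_, ?_, ?_⟩
  · intro k
    beta_reduce
    have h1 := (hftc k).symm.trans (hsplit_p k)
    have hsum : ∑ l, (Δt * G (x t₀) k l + ∫ s in t₀..T, (T - s) * hp k l s) * u l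
        = Δt * (∑ l, G (x t₀) k l * u l)
          + ∑ l, u l * ∫ s in t₀..T, (T - s) * hp k l s := by
      rw [Finset.mul_sum, ← Finset.sum_add_distrib]
      exact Finset.sum_congr rfl fun l _ => by ring
    rw [hsum]
    rw [hdt0 k] at h1
    linarith [h1]
  · intro k
    beta_reduce
    have h1 := (hftc k).symm.trans (hsplit_q k)
    have hsum : ∑ l, (Δt * G (x t₀) k l + ∫ s in t₀..T, (T - s) * hq k l s) * u l
        = Δt * (∑ l, G (x t₀) k l * u l)
          + ∑ l, u l * ∫ s in t₀..T, (T - s) * hq k l s := by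
      rw [Finset.mul_sum, ← Finset.sum_add_distrib]
      exact Finset.sum_congr rfl fun l _ => by ring
    rw [hsum]
    rw [hdt0 k] at h1
    linarith [h1]
  · intro k
    beta_reduce
    have hKb := (Kb k).2
    rw [hTt] at hKb
    have he : (x t₀ k + Δt * f (x t₀) k + ∫ s in t₀..T, (T - s) * hb k s)
        - x t₀ k - Δt * f (x t₀) k = ∫ s in t₀..T, (T - s) * hb k s := by ring
    rw [he]
    exact hKb
  · intro k l
    beta_reduce
    have hKp := (Kp k l).2
    rw [hTt] at hKp
    have he : (Δt * G (x t₀) k l + ∫ s in t₀..T, (T - s) * hp k l s)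
        - Δt * G (x t₀) k l = ∫ s in t₀..T, (T - s) * hp k l s := by ring
    rw [he]
    exact hKp
  · intro k l
    beta_reduce
    have hKq := (Kq k l).2
    rw [hTt] at hKq
    have he : (Δt * G (x t₀) k l + ∫ s in t₀..T, (T - s) * hq k l s)
        - Δt * G (x t₀) k l = ∫ s in t₀..T, (T - s) * hq k l s := by ring
    rw [he]
    exact hKq
end

section
/- Let n, m ≥ 1 and let c(u, y) = yᵀQy + uᵀRu + 2·yᵀSu + qᵀy + rᵀu with Q ∈ ℝ^{n×n} symmetric, R ∈ ℝ^{m×m}, S ∈ ℝ^{n×m}, q ∈ ℝⁿ, r ∈ ℝᵐ. Let 𝒰 = ∏_{l=1}^m [u_lo_l, u_hi_l] with u_lo ≤ u_hi, and set v_l = max(|u_lo_l|, |u_hi_l|). Let b_lo ≤ b_hi in ℝⁿ and, for σ ∈ {+, −}, matrices A^σ_lo ≤ A^σ_hi in ℝ^{n×m} (entrywise); for u ∈ ℝᵐ define S^σ(u) = { b + M·u : b ∈ ℝⁿ, M ∈ ℝ^{n×m}, b_lo ≤ b ≤ b_hi, A^σ_lo ≤ M ≤ A^σ_hi }. Let χ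 : 𝒰 → ℝⁿ satisfy χ(u) ∈ S⁺(u) ∩ S⁻(u) for every u ∈ 𝒰. Define c* = inf_{u ∈ 𝒰} c(u, χ(u)) and c_opt = inf_{u ∈ 𝒰} inf_{y ∈ S⁺(u) ∩ S⁻(u)} c(u, y). For σ ∈ {+, −} set W^σ = ‖w^σ‖₂ where w^σ_k = (b_hi_k − b_lo_k) + Σ_{l=1}^m (A^σ_hi − A^σ_lo)_{k,l}·v_l, and K^σ = sup{ ‖2·Q·z + 2·S·u + q‖₂ : u ∈ 𝒰, z ∈ S^σ(u') for some u' ∈ 𝒰 }. Then 0 ≤ c* − c_opt ≤ max(W⁺·K⁺, W⁻·K⁻). -/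
open Finset

/-- Membership of a vector in a box given by componentwise bounds. -/
def inBox {d : ℕ} (lo hi x : Fin d → ℝ) : Prop := ∀ i, lo i ≤ x i ∧ x i ≤ hi i

/-- Membership of a matrix in an interval matrix given by entrywise bounds. -/
def inMat {n m : ℕ} (lo hi M : Fin n → Fin m → ℝ) : Prop :=
  ∀ k l, lo k l ≤ M k l ∧ M k l ≤ hi k l

/-- The quadratic one-step cost c(u, y) = yᵀQy + uᵀRu + 2 yᵀSu + qᵀy + rᵀu. -/
noncomputable def quadCost {n m : ℕ} (Q : Fin n → Fin n → ℝ) (R : Fin m → Fin m → ℝ)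
    (S : Fin n → Fin m → ℝ) (q : Fin n → ℝ) (r : Fin m → ℝ)
    (u : Fin m → ℝ) (y : Fin n → ℝ) : ℝ :=
  (∑ k, ∑ p, y k * Q k p * y p) + (∑ l, ∑ j, u l * R l j * u j)
    + 2 * (∑ k, ∑ l, y k * S k l * u l) + (∑ k, q k * y k) + (∑ l, r l * u l)

/-- The affine-in-u set S^σ(u) = { b + M·u : b_lo ≤ b ≤ b_hi, A_lo ≤ M ≤ A_hi }. -/
def affSet {n m : ℕ} (blo bhi : Fin n → ℝ) (Alo Ahi : Fin n → Fin m → ℝ)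
    (u : Fin m → ℝ) : Set (Fin n → ℝ) :=
  {y | ∃ (b : Fin n → ℝ) (M : Fin n → Fin m → ℝ), inBox blo bhi b ∧ inMat Alo Ahi M ∧
    y = fun k => b k + ∑ l, M k l * u l}

/-! ### Auxiliary lemmas -/

lemma OSB.abs_le_max' {lo hi x : ℝ} (h1 : lo ≤ x) (h2 : x ≤ hi) : |x| ≤ max |lo| |hi| := by
  rw [abs_le]
  constructor
  · have h3 := neg_abs_le lo
    have h4 := le_max_left |lo| |hi|
    linarith
  · have h3 := le_abs_self hi
    have h4 := le_max_right |lo| |hi|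
    linarith

lemma OSB.sqrt_sum_sq_mono {n : ℕ} {f g : Fin n → ℝ} (h : ∀ k, |f k| ≤ g k) :
    Real.sqrt (∑ k, f k ^ 2) ≤ Real.sqrt (∑ k, g k ^ 2) :=
  Real.sqrt_le_sqrt (Finset.sum_le_sum fun k _ => by
    have h1 := h k
    nlinarith [abs_nonneg (f k), sq_abs (f k)])

lemma OSB.abs_sum2_le {n m : ℕ} {f g : Fin n → Fin m → ℝ} (h : ∀ k l, |f k l| ≤ g k l) :
    |∑ k, ∑ l, f k l| ≤ ∑ k, ∑ l, g k l :=
  (Finset.abs_sum_le_sum_abs _ _).trans (Finset.sum_le_sum fun k _ =>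
    (Finset.abs_sum_le_sum_abs _ _).trans (Finset.sum_le_sum fun l _ => h k l))

lemma OSB.abs_sum1_le {n : ℕ} {f g : Fin n → ℝ} (h : ∀ k, |f k| ≤ g k) :
    |∑ k, f k| ≤ ∑ k, g k :=
  (Finset.abs_sum_le_sum_abs _ _).trans (Finset.sum_le_sum fun k _ => h k)

lemma OSB.abs_mul3_le {a b c A C : ℝ} (ha : |a| ≤ A) (hc : |c| ≤ C) :
    |a * b * c| ≤ A * |b| * C := by
  rw [abs_mul, abs_mul]
  have h0 : (0:ℝ) ≤ A := le_trans (abs_nonneg _) ha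
  calc |a| * |b| * |c| ≤ A * |b| * |c| :=
        mul_le_mul_of_nonneg_right (mul_le_mul_of_nonneg_right ha (abs_nonneg _)) (abs_nonneg _)
    _ ≤ A * |b| * C := mul_le_mul_of_nonneg_left hc (by positivity)

lemma OSB.quad_diff {n m : ℕ} (Q : Fin n → Fin n → ℝ) (hQ : ∀ k p, Q k p = Q p k)
    (R : Fin m → Fin m → ℝ) (S : Fin n → Fin m → ℝ) (q : Fin n → ℝ) (r : Fin m → ℝ)
    (u : Fin m → ℝ) (a b : Fin n → ℝ) :
    quadCost Q R S q r u a - quadCost Q R S q r u b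
      = ∑ k, (2 * (∑ p, Q k p * ((a p + b p) / 2)) + 2 * (∑ l, S k l * u l) + q k)
          * (a k - b k) := by
  have hswap : (∑ k, ∑ p, Q k p * b p * a k) = ∑ k, ∑ p, Q k p * a p * b k := by
    rw [Finset.sum_comm]
    exact Finset.sum_congr rfl fun k _ => Finset.sum_congr rfl fun p _ => by rw [hQ]; ring
  have hR : ∀ k, (2 * (∑ p, Q k p * ((a p + b p) / 2)) + 2 * (∑ l, S k l * u l) + q k)
          * (a k - b k)
      = (∑ p, (a k * Q k p * a p - b k * Q k p * b p
          + (Q k p * b p * a k - Q k p * a p * b k)))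
        + ((∑ l, (2 * (a k * S k l * u l) - 2 * (b k * S k l * u l))))
        + (q k * a k - q k * b k) := by
    intro k
    have e1 : (2 * ∑ p, Q k p * ((a p + b p) / 2)) * (a k - b k)
        = ∑ p, (a k * Q k p * a p - b k * Q k p * b p
            + (Q k p * b p * a k - Q k p * a p * b k)) := by
      rw [Finset.mul_sum, Finset.sum_mul]
      exact Finset.sum_congr rfl fun p _ => by ring
    have e2 : (2 * ∑ l, S k l * u l) * (a k - b k)
        = ∑ l, (2 * (a k * S k l * u l) - 2 * (b k * S k l * u l)) := by
      rw [Finset.mul_sum, Finset.sum_mul]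
      exact Finset.sum_congr rfl fun l _ => by ring
    rw [add_mul, add_mul, e1, e2]; ring
  rw [Finset.sum_congr rfl fun k _ => hR k]
  simp only [Finset.sum_add_distrib, Finset.sum_sub_distrib]
  rw [hswap]
  unfold quadCost
  rw [Finset.mul_sum]
  simp only [Finset.sum_sub_distrib, Finset.mul_sum]
  ring

theorem optimistic_suboptimality_bound (n m : ℕ) (hn : 1 ≤ n) (hm : 1 ≤ m)
    (Q : Fin n → Fin n → ℝ) (hQ : ∀ k p, Q k p = Q p k)
    (R : Fin m → Fin m → ℝ) (S : Fin n → Fin m → ℝ)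
    (q : Fin n → ℝ) (r : Fin m → ℝ)
    (ulo uhi : Fin m → ℝ) (hu : ∀ l, ulo l ≤ uhi l)
    (v : Fin m → ℝ) (hv : ∀ l, v l = max |ulo l| |uhi l|)
    (blo bhi : Fin n → ℝ) (hb : ∀ k, blo k ≤ bhi k)
    (Aplo Aphi Amlo Amhi : Fin n → Fin m → ℝ)
    (hAp : ∀ k l, Aplo k l ≤ Aphi k l) (hAm : ∀ k l, Amlo k l ≤ Amhi k l)
    (χ : (Fin m → ℝ) → (Fin n → ℝ))
    (hχ : ∀ u, inBox ulo uhi u →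
      χ u ∈ affSet blo bhi Aplo Aphi u ∩ affSet blo bhi Amlo Amhi u)
    (cstar copt : ℝ)
    (hcstar : cstar = sInf {c : ℝ | ∃ u, inBox ulo uhi u ∧ c = quadCost Q R S q r u (χ u)})
    (hcopt : copt = sInf {c : ℝ | ∃ u, inBox ulo uhi u ∧
      ∃ y ∈ affSet blo bhi Aplo Aphi u ∩ affSet blo bhi Amlo Amhi u,
        c = quadCost Q R S q r u y})
    (Wp Wm Kp Km : ℝ)
    (hWp : Wp = Real.sqrt (∑ k, ((bhi k - blo k) + ∑ l, (Aphi k l - Aplo k l) * v l) ^ 2))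
    (hWm : Wm = Real.sqrt (∑ k, ((bhi k - blo k) + ∑ l, (Amhi k l - Amlo k l) * v l) ^ 2))
    (hKp : Kp = sSup {c : ℝ | ∃ u, inBox ulo uhi u ∧ ∃ u', inBox ulo uhi u' ∧
      ∃ z ∈ affSet blo bhi Aplo Aphi u',
        c = Real.sqrt (∑ k, (2 * (∑ p, Q k p * z p) + 2 * (∑ l, S k l * u l) + q k) ^ 2)})
    (hKm : Km = sSup {c : ℝ | ∃ u, inBox ulo uhi u ∧ ∃ u', inBox ulo uhi u' ∧
      ∃ z ∈ affSet blo bhi Amlo Amhi u',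
        c = Real.sqrt (∑ k, (2 * (∑ p, Q k p * z p) + 2 * (∑ l, S k l * u l) + q k) ^ 2)}) :
    0 ≤ cstar - copt ∧ cstar - copt ≤ max (Wp * Kp) (Wm * Km) := by
  -- basic facts
  have hvnn : ∀ l, 0 ≤ v l := fun l => (hv l) ▸ le_trans (abs_nonneg _) (le_max_left _ _)
  have huv : ∀ u, inBox ulo uhi u → ∀ l, |u l| ≤ v l := fun u hub l =>
    (hv l) ▸ OSB.abs_le_max' (hub l).1 (hub l).2
  set Z : Fin n → ℝ := fun p => max |blo p| |bhi p| + ∑ l, max |Aplo p l| |Aphi p l| * v l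
    with hZdef
  have hZnn : ∀ p, 0 ≤ Z p := fun p =>
    add_nonneg (le_trans (abs_nonneg _) (le_max_left _ _))
      (Finset.sum_nonneg fun l _ =>
        mul_nonneg (le_trans (abs_nonneg _) (le_max_left _ _)) (hvnn l))
  have hyZ : ∀ u y, inBox ulo uhi u → y ∈ affSet blo bhi Aplo Aphi u → ∀ k, |y k| ≤ Z k := by
    rintro u y hub ⟨b, M, hbB, hM, rfl⟩ k
    calc |b k + ∑ l, M k l * u l| ≤ |b k| + |∑ l, M k l * u l| := abs_add_le _ _
      _ ≤ max |blo k| |bhi k| + ∑ l, max |Aplo k l| |Aphi k l| * v l := by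
          apply add_le_add (OSB.abs_le_max' (hbB k).1 (hbB k).2)
          apply OSB.abs_sum1_le
          intro l
          rw [abs_mul]
          exact mul_le_mul (OSB.abs_le_max' (hM k l).1 (hM k l).2) (huv u hub l)
            (abs_nonneg _) (le_trans (abs_nonneg _) (le_max_left _ _))
      _ = Z k := rfl
  -- explicit lower bound for costs
  set C : ℝ := (∑ k, ∑ p, Z k * |Q k p| * Z p) + (∑ l, ∑ j, v l * |R l j| * v j)
    + 2 * (∑ k, ∑ l, Z k * |S k l| * v l) + (∑ k, |q k| * Z k) + (∑ l, |r l| * v l) with hCdef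
  have hcostlb : ∀ u y, inBox ulo uhi u → y ∈ affSet blo bhi Aplo Aphi u →
      -C ≤ quadCost Q R S q r u y := by
    intro u y hub hyA
    have hy := hyZ u y hub hyA
    have h1 : |∑ k, ∑ p, y k * Q k p * y p| ≤ ∑ k, ∑ p, Z k * |Q k p| * Z p :=
      OSB.abs_sum2_le fun k p => OSB.abs_mul3_le (hy k) (hy p)
    have h2 : |∑ l, ∑ j, u l * R l j * u j| ≤ ∑ l, ∑ j, v l * |R l j| * v j :=
      OSB.abs_sum2_le fun l j => OSB.abs_mul3_le (huv u hub l) (huv u hub j)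
    have h3 : |∑ k, ∑ l, y k * S k l * u l| ≤ ∑ k, ∑ l, Z k * |S k l| * v l :=
      OSB.abs_sum2_le fun k l => OSB.abs_mul3_le (hy k) (huv u hub l)
    have h4 : |∑ k, q k * y k| ≤ ∑ k, |q k| * Z k := by
      apply OSB.abs_sum1_le
      intro k
      rw [abs_mul]
      exact mul_le_mul_of_nonneg_left (hy k) (abs_nonneg _)
    have h5 : |∑ l, r l * u l| ≤ ∑ l, |r l| * v l := by
      apply OSB.abs_sum1_le
      intro l
      rw [abs_mul]
      exact mul_le_mul_of_nonneg_left (huv u hub l) (abs_nonneg _)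
    have e1 := neg_abs_le (∑ k, ∑ p, y k * Q k p * y p)
    have e2 := neg_abs_le (∑ l, ∑ j, u l * R l j * u j)
    have e3 := neg_abs_le (∑ k, ∑ l, y k * S k l * u l)
    have e4 := neg_abs_le (∑ k, q k * y k)
    have e5 := neg_abs_le (∑ l, r l * u l)
    unfold quadCost
    rw [hCdef]
    linarith
  -- the feasible sets
  set Tset : Set ℝ := {c : ℝ | ∃ u, inBox ulo uhi u ∧
      ∃ y ∈ affSet blo bhi Aplo Aphi u ∩ affSet blo bhi Amlo Amhi u,
        c = quadCost Q R S q r u y} with hTdef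
  set Sset : Set ℝ := {c : ℝ | ∃ u, inBox ulo uhi u ∧ c = quadCost Q R S q r u (χ u)}
    with hSdef
  have hsub : Sset ⊆ Tset := by
    rintro c ⟨u, hub, rfl⟩
    exact ⟨u, hub, χ u, hχ u hub, rfl⟩
  have hbddT : BddBelow Tset := by
    refine ⟨-C, ?_⟩
    rintro c ⟨u, hub, y, hy, rfl⟩
    exact hcostlb u y hub hy.1
  have hbddS : BddBelow Sset := hbddT.mono hsub
  have boxulo : inBox ulo uhi ulo := fun l => ⟨le_refl _, hu l⟩
  have hSne : (quadCost Q R S q r ulo (χ ulo)) ∈ Sset := ⟨ulo, boxulo, rfl⟩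
  -- upper bound for the Kp set
  have hKbdd : BddAbove {c : ℝ | ∃ u, inBox ulo uhi u ∧ ∃ u', inBox ulo uhi u' ∧
      ∃ z ∈ affSet blo bhi Aplo Aphi u',
        c = Real.sqrt (∑ k, (2 * (∑ p, Q k p * z p) + 2 * (∑ l, S k l * u l) + q k) ^ 2)} := by
    refine ⟨Real.sqrt (∑ k, (2 * (∑ p, |Q k p| * Z p) + 2 * (∑ l, |S k l| * v l) + |q k|) ^ 2), ?_⟩
    rintro c ⟨u, hub, u', hub', z, hz, rfl⟩
    apply OSB.sqrt_sum_sq_mono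
    intro k
    have hzZ := hyZ u' z hub' hz
    have b1 : |∑ p, Q k p * z p| ≤ ∑ p, |Q k p| * Z p := by
      apply OSB.abs_sum1_le
      intro p
      rw [abs_mul]
      exact mul_le_mul_of_nonneg_left (hzZ p) (abs_nonneg _)
    have b2 : |∑ l, S k l * u l| ≤ ∑ l, |S k l| * v l := by
      apply OSB.abs_sum1_le
      intro l
      rw [abs_mul]
      exact mul_le_mul_of_nonneg_left (huv u hub l) (abs_nonneg _)
    calc |2 * (∑ p, Q k p * z p) + 2 * (∑ l, S k l * u l) + q k|
        ≤ |2 * (∑ p, Q k p * z p) + 2 * (∑ l, S k l * u l)| + |q k| := abs_add_le _ _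
      _ ≤ |2 * (∑ p, Q k p * z p)| + |2 * (∑ l, S k l * u l)| + |q k| := by
          have := abs_add_le (2 * (∑ p, Q k p * z p)) (2 * (∑ l, S k l * u l))
          linarith
      _ ≤ 2 * (∑ p, |Q k p| * Z p) + 2 * (∑ l, |S k l| * v l) + |q k| := by
          rw [abs_mul, abs_mul]
          simp only [abs_two]
          linarith
  -- midpoint lemma
  have hmid : ∀ u y₁ y₂, y₁ ∈ affSet blo bhi Aplo Aphi u → y₂ ∈ affSet blo bhi Aplo Aphi u →
      (fun p => (y₁ p + y₂ p) / 2) ∈ affSet blo bhi Aplo Aphi u := by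
    rintro u y₁ y₂ ⟨b₁, M₁, hb₁, hM₁, rfl⟩ ⟨b₂, M₂, hb₂, hM₂, rfl⟩
    refine ⟨fun k => (b₁ k + b₂ k) / 2, fun k l => (M₁ k l + M₂ k l) / 2, ?_, ?_, ?_⟩
    · intro k
      constructor
      · have := (hb₁ k).1; have := (hb₂ k).1; linarith
      · have := (hb₁ k).2; have := (hb₂ k).2; linarith
    · intro k l
      constructor
      · have := (hM₁ k l).1; have := (hM₂ k l).1; linarith
      · have := (hM₁ k l).2; have := (hM₂ k l).2; linarith
    · funext k
      have hsum : ∑ l, (M₁ k l + M₂ k l) / 2 * u l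
          = (∑ l, M₁ k l * u l + ∑ l, M₂ k l * u l) / 2 := by
        rw [← Finset.sum_add_distrib, Finset.sum_div]
        exact Finset.sum_congr rfl fun l _ => by ring
      simp only
      rw [hsum]
      ring
  -- the main estimate
  have hmain : ∀ u y, inBox ulo uhi u →
      y ∈ affSet blo bhi Aplo Aphi u ∩ affSet blo bhi Amlo Amhi u →
      quadCost Q R S q r u (χ u) - quadCost Q R S q r u y ≤ max (Wp * Kp) (Wm * Km) := by
    intro u y hub hy
    have hχp := (hχ u hub).1
    have hdiff := OSB.quad_diff Q hQ R S q r u (χ u) y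
    have hξ : (fun p => (χ u p + y p) / 2) ∈ affSet blo bhi Aplo Aphi u :=
      hmid u (χ u) y hχp hy.1
    have hCS : (∑ k, (2 * (∑ p, Q k p * ((χ u p + y p) / 2)) + 2 * (∑ l, S k l * u l) + q k)
            * (χ u k - y k))
        ≤ Real.sqrt (∑ k, (2 * (∑ p, Q k p * ((χ u p + y p) / 2))
              + 2 * (∑ l, S k l * u l) + q k) ^ 2)
          * Real.sqrt (∑ k, (χ u k - y k) ^ 2) :=
      Real.sum_mul_le_sqrt_mul_sqrt _ _ _
    have hKle : Real.sqrt (∑ k, (2 * (∑ p, Q k p * ((χ u p + y p) / 2))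
          + 2 * (∑ l, S k l * u l) + q k) ^ 2) ≤ Kp := by
      rw [hKp]
      exact le_csSup hKbdd ⟨u, hub, u, hub, (fun p => (χ u p + y p) / 2), hξ, rfl⟩
    have hWle : Real.sqrt (∑ k, (χ u k - y k) ^ 2) ≤ Wp := by
      rw [hWp]
      apply OSB.sqrt_sum_sq_mono
      intro k
      obtain ⟨b₁, M₁, hb₁, hM₁, he₁⟩ := hχp
      obtain ⟨b₂, M₂, hb₂, hM₂, he₂⟩ := hy.1
      have hk : χ u k - y k = (b₁ k - b₂ k) + ∑ l, (M₁ k l - M₂ k l) * u l := by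
        rw [he₁, he₂]
        simp only [sub_mul, Finset.sum_sub_distrib]
        ring
      rw [hk]
      calc |(b₁ k - b₂ k) + ∑ l, (M₁ k l - M₂ k l) * u l|
          ≤ |b₁ k - b₂ k| + |∑ l, (M₁ k l - M₂ k l) * u l| := abs_add_le _ _
        _ ≤ (bhi k - blo k) + ∑ l, (Aphi k l - Aplo k l) * v l := by
            apply add_le_add
            · rw [abs_le]
              constructor
              · have := (hb₁ k).1; have := (hb₂ k).2; linarith
              · have := (hb₁ k).2; have := (hb₂ k).1; linarith
            · apply OSB.abs_sum1_le
              intro l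
              rw [abs_mul]
              apply mul_le_mul _ (huv u hub l) (abs_nonneg _) (by linarith [hAp k l])
              rw [abs_le]
              constructor
              · have := (hM₁ k l).1; have := (hM₂ k l).2; linarith
              · have := (hM₁ k l).2; have := (hM₂ k l).1; linarith
    have hKnn : 0 ≤ Kp := le_trans (Real.sqrt_nonneg _) hKle
    have hprod : Real.sqrt (∑ k, (2 * (∑ p, Q k p * ((χ u p + y p) / 2))
              + 2 * (∑ l, S k l * u l) + q k) ^ 2)
          * Real.sqrt (∑ k, (χ u k - y k) ^ 2) ≤ Kp * Wp :=
      mul_le_mul hKle hWle (Real.sqrt_nonneg _) hKnn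
    have hcomm : Kp * Wp = Wp * Kp := mul_comm _ _
    have hmax : Wp * Kp ≤ max (Wp * Kp) (Wm * Km) := le_max_left _ _
    linarith
  constructor
  · have h1 : copt ≤ cstar := by
      rw [hcstar, hcopt]
      exact csInf_le_csInf hbddT ⟨_, hSne⟩ hsub
    linarith
  · have h2 : cstar - max (Wp * Kp) (Wm * Km) ≤ copt := by
      rw [hcopt]
      apply le_csInf ⟨_, hsub hSne⟩
      rintro c ⟨u, hub, y, hy, rfl⟩
      have h3 : cstar ≤ quadCost Q R S q r u (χ u) := by
        rw [hcstar]
        exact csInf_le hbddS ⟨u, hub, rfl⟩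
      have h4 := hmain u y hub hy
      linarith
    linarith
end
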